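/- arXiv:1302.2655 — 3 statements merged into one kernel-verified Lean document; each statement's English description precedes it below -/
import Mathlib

section
/- Let H be a simple quasi-cubic graph that has at least one vertex of degree 3 but is not cubic, and let e₁, e₂, …, eₙ be the edges of H that are incident to a vertex of degree 1. If γ is any edge-3-coloring of H, then γ(e₁) + γ(e₂) + ⋯ + γ(eₙ) = 0 in the group Z₂×Z₂ (Parity Lemma). -/
namespace SnarkPaper

open SimpleGraph

/-- The color group `Z₂ × Z₂`. -/
abbrev Color : Type := ZMod 2 × ZMod 2

/-- The color `a = (0,1)`. -/
def colA : Color := (0, 1)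
/-- The color `b = (1,0)`. -/
def colB : Color := (1, 0)
/-- The color `c = (1,1)`. -/
def colC : Color := (1, 1)

/-- The set of the three nonzero elements of `Z₂ × Z₂` used as colors. -/
def colorSet : Set Color := {colA, colB, colC}

variable {V V₁ V₂ : Type*}

/-- Two edges are adjacent if they are distinct and share an endpoint. -/
def EdgesAdj (e f : Sym2 V) : Prop := e ≠ f ∧ ∃ x, x ∈ e ∧ x ∈ f

/-- The set of edge-3-colorings of `G`: functions assigning to each edge of `G` one of the
three nonzero elements of `Z₂ × Z₂` so that adjacent edges get distinct values (and pinned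
to `0` off the edge set, so that counting colorings is faithful). -/
def EC (G : SimpleGraph V) : Set (Sym2 V → Color) :=
  {γ | (∀ e ∈ G.edgeSet, γ e ∈ colorSet) ∧ (∀ e ∉ G.edgeSet, γ e = 0) ∧
       ∀ e ∈ G.edgeSet, ∀ f ∈ G.edgeSet, EdgesAdj e f → γ e ≠ γ f}

/-- The set of 3-edge-decompositions of `G`: partitions of the edge set of `G` into three
classes such that no two adjacent edges lie in the same class. -/
def ED (G : SimpleGraph V) : Set (Set (Set (Sym2 V))) :=
  {D | D.ncard = 3 ∧ (∀ s ∈ D, s ⊆ G.edgeSet) ∧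
       (∀ e ∈ G.edgeSet, ∃! s, s ∈ D ∧ e ∈ s) ∧
       (∀ s ∈ D, ∀ e ∈ s, ∀ f ∈ s, ¬ EdgesAdj e f)}

/-- Two edges lie in the same class of the decomposition `D`. -/
def SameClass (D : Set (Set (Sym2 V))) (e f : Sym2 V) : Prop :=
  ∃ s ∈ D, e ∈ s ∧ f ∈ s

/-- A graph is cubic if every vertex has degree 3. -/
def IsCubic (G : SimpleGraph V) : Prop := ∀ v, (G.neighborSet v).ncard = 3

/-- A graph is quasi-cubic if every vertex has degree 1 or 3. -/
def IsQuasiCubic (G : SimpleGraph V) : Prop :=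
  ∀ v, (G.neighborSet v).ncard = 1 ∨ (G.neighborSet v).ncard = 3

/-- `G` is cyclically `n`-edge-connected: for any two vertex-disjoint cycles `C₁`, `C₂` and
any set `S` of at most `n-1` edges of `G` containing no edge of `C₁` or `C₂`, deleting `S`
leaves a path from a vertex of `C₁` to a vertex of `C₂`. -/
def CyclicallyEdgeConnected (G : SimpleGraph V) (n : ℕ) : Prop :=
  ∀ ⦃x y : V⦄ (C₁ : G.Walk x x) (C₂ : G.Walk y y), C₁.IsCycle → C₂.IsCycle →
    (∀ w, w ∈ C₁.support → w ∉ C₂.support) →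
    ∀ S : Set (Sym2 V), S ⊆ G.edgeSet → S.ncard ≤ n - 1 →
      (∀ e ∈ S, e ∉ C₁.edges ∧ e ∉ C₂.edges) →
      ∃ x' ∈ C₁.support, ∃ y' ∈ C₂.support, (G.deleteEdges S).Reachable x' y'

/-- A snark: a connected cubic graph with girth at least 5 which is cyclically
4-edge-connected and admits no edge-3-coloring. -/
def IsSnark (G : SimpleGraph V) : Prop :=
  G.Connected ∧ IsCubic G ∧ 5 ≤ G.girth ∧ CyclicallyEdgeConnected G 4 ∧ EC G = ∅

/-- The edges `d₁` and `d₂` lie in a common (two-colored) Kempe cycle for the coloring `γ`. -/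
def InCommonKempeCycle (G : SimpleGraph V) (γ : Sym2 V → Color) (d₁ d₂ : Sym2 V) : Prop :=
  ∃ x ∈ colorSet, ∃ y ∈ colorSet, x ≠ y ∧
    ∃ (a : V) (C : G.Walk a a), C.IsCycle ∧
      (∀ e ∈ C.edges, γ e = x ∨ γ e = y) ∧ d₁ ∈ C.edges ∧ d₂ ∈ C.edges

/-- Two edges of `G` are orthogonal if no edge-3-coloring of `G` puts them in a common
Kempe cycle. -/
def OrthogonalEdges (G : SimpleGraph V) (d₁ d₂ : Sym2 V) : Prop :=
  d₁ ∈ G.edgeSet ∧ d₂ ∈ G.edgeSet ∧ ∀ γ ∈ EC G, ¬ InCommonKempeCycle G γ d₁ d₂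

/-- The graph `G_e` for the edge `e = s(u,v)`: delete `u`, `v` and the five edges incident
to them (leaving `u` and `v` as isolated vertices), and add the new edge `d₁` joining the two
other neighbors of `u` and the new edge `d₂` joining the two other neighbors of `v`. -/
def edgeDeleted (G : SimpleGraph V) (u v : V) : SimpleGraph V :=
  SimpleGraph.fromEdgeSet
    ({e ∈ G.edgeSet | u ∉ e ∧ v ∉ e} ∪
     {e | ∃ x y, e = s(x, y) ∧ x ≠ y ∧ G.Adj u x ∧ G.Adj u y ∧ x ≠ v ∧ y ≠ v} ∪
     {e | ∃ x y, e = s(x, y) ∧ x ≠ y ∧ G.Adj v x ∧ G.Adj v y ∧ x ≠ u ∧ y ≠ u})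


/-- **Parity Lemma.** For a connected quasi-cubic graph `H` with at least one vertex of
degree 3 which is not cubic, and any edge-3-coloring `γ` of `H`, the sum of the colors of
the edges incident to a degree-1 vertex is `0` in `Z₂ × Z₂`. -/
theorem statement_0 {V : Type*} [Fintype V] (H : SimpleGraph V)
    (hconn : H.Connected) (hquasi : IsQuasiCubic H)
    (h3 : ∃ w, (H.neighborSet w).ncard = 3) (hnc : ¬ IsCubic H)
    (γ : Sym2 V → Color) (hγ : γ ∈ EC H) :
    (∑ᶠ e ∈ {e : Sym2 V | e ∈ H.edgeSet ∧ ∃ x ∈ e, (H.neighborSet x).ncard = 1}, γ e)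
      = (0 : Color) := by
  classical
  obtain ⟨hmem, hzero, hadj⟩ := hγ
  set dg : V → ℕ := fun v => (H.neighborSet v).ncard with hdg
  set inc : V → Finset (Sym2 V) := fun v => (H.incidenceSet v).toFinset with hinc
  have hmemInc : ∀ v e, e ∈ inc v ↔ e ∈ H.edgeSet ∧ v ∈ e := by
    intro v e
    show e ∈ (H.incidenceSet v).toFinset ↔ _
    rw [Set.mem_toFinset]
    exact Iff.rfl
  have hcardInc : ∀ v, (inc v).card = dg v := by
    intro v
    show (H.incidenceSet v).toFinset.card = (H.neighborSet v).ncard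
    rw [← Set.ncard_eq_toFinset_card', ← Nat.card_coe_set_eq,
      ← Nat.card_coe_set_eq]
    exact Nat.card_congr (H.incidenceSetEquivNeighborSet v)
  -- sum over incidence edges of a degree-3 vertex is 0
  have h3sum : ∀ v, dg v = 3 → ∑ e ∈ inc v, γ e = 0 := by
    intro v hv
    have hinj : Set.InjOn γ (inc v) := by
      intro e he f hf hef
      by_contra hne
      obtain ⟨heE, hev⟩ := (hmemInc v e).1 he
      obtain ⟨hfE, hfv⟩ := (hmemInc v f).1 hf
      exact hadj e heE f hfE ⟨hne, v, hev, hfv⟩ hef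
    have himg : (inc v).image γ ⊆ {colA, colB, colC} := by
      intro x hx
      obtain ⟨e, he, rfl⟩ := Finset.mem_image.1 hx
      have := hmem e ((hmemInc v e).1 he).1
      simpa [colorSet] using this
    have hc3 : ({colA, colB, colC} : Finset Color).card = 3 := by decide
    have hcard : ((inc v).image γ).card = 3 := by
      rw [Finset.card_image_of_injOn hinj, hcardInc, hv]
    have himgeq : (inc v).image γ = {colA, colB, colC} :=
      Finset.eq_of_subset_of_card_le himg (by rw [hcard, hc3])
    calc ∑ e ∈ inc v, γ e = ∑ x ∈ (inc v).image γ, x := by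
            rw [Finset.sum_image (fun e he f hf h => hinj he hf h)]
      _ = ∑ x ∈ ({colA, colB, colC} : Finset Color), x := by rw [himgeq]
      _ = 0 := by decide
  -- total double-counting sum is 0
  have hxx : ∀ x : Color, x + x = 0 := by decide
  have htot : ∑ v : V, ∑ e ∈ inc v, γ e = 0 := by
    have h1 : ∀ v, ∑ e ∈ inc v, γ e
        = ∑ e ∈ H.edgeFinset, if v ∈ e then γ e else 0 := by
      intro v
      rw [← Finset.sum_filter]
      apply Finset.sum_congr _ (fun _ _ => rfl)
      ext e
      simp [hmemInc v e, Finset.mem_filter, SimpleGraph.mem_edgeFinset, and_comm]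
    calc ∑ v : V, ∑ e ∈ inc v, γ e
        = ∑ v : V, ∑ e ∈ H.edgeFinset, if v ∈ e then γ e else 0 := by
          exact Finset.sum_congr rfl fun v _ => h1 v
      _ = ∑ e ∈ H.edgeFinset, ∑ v : V, if v ∈ e then γ e else 0 := Finset.sum_comm
      _ = 0 := by
          apply Finset.sum_eq_zero
          intro e he
          have heE : e ∈ H.edgeSet := SimpleGraph.mem_edgeFinset.1 he
          induction e with
          | h a b =>
            have hab : a ≠ b := H.ne_of_adj heE
            have : (Finset.univ.filter (· ∈ s(a, b))).card = 2 := by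
              have : Finset.univ.filter (· ∈ s(a, b)) = {a, b} := by
                ext x; simp [Sym2.mem_iff]
              rw [this, Finset.card_insert_of_notMem (by simpa using hab),
                Finset.card_singleton]
            rw [← Finset.sum_filter, Finset.sum_const, this, two_nsmul, hxx]
  -- degree-1 vertices and their pendant edges
  have h1sing : ∀ v, dg v = 1 → ∃ e, inc v = {e} := by
    intro v hv
    exact Finset.card_eq_one.mp (by rw [hcardInc, hv])
  set f : V → Sym2 V := fun v =>
    if h : dg v = 1 then (h1sing v h).choose else s(v, v) with hf
  have hfinc : ∀ v, dg v = 1 → inc v = {f v} := by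
    intro v hv
    rw [hf]; simp only [dif_pos hv]
    exact (h1sing v hv).choose_spec
  have hfmem : ∀ v, dg v = 1 → f v ∈ H.edgeSet ∧ v ∈ f v := by
    intro v hv
    have : f v ∈ inc v := by rw [hfinc v hv]; exact Finset.mem_singleton_self _
    exact (hmemInc v _).1 this
  set D1 : Finset V := Finset.univ.filter (fun v => dg v = 1) with hD1
  have hsumD1 : ∑ v ∈ D1, γ (f v) = 0 := by
    rw [← htot]
    symm
    rw [← Finset.sum_filter_add_sum_filter_not Finset.univ (fun v => dg v = 1)]
    have hz : ∑ v ∈ Finset.univ.filter (fun v => ¬ dg v = 1), ∑ e ∈ inc v, γ e = 0 := by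
      apply Finset.sum_eq_zero
      intro v hv
      have := (Finset.mem_filter.1 hv).2
      rcases hquasi v with h | h
      · exact absurd h this
      · exact h3sum v h
    rw [hz, add_zero]
    apply Finset.sum_congr rfl
    intro v hv
    rw [hfinc v (Finset.mem_filter.1 hv).2, Finset.sum_singleton]
  -- no two degree-1 vertices are adjacent (uses connectedness + deg-3 vertex)
  have hnadj : ∀ u v, H.Adj u v → dg u = 1 → dg v = 1 → False := by
    intro u v huv hu hv
    obtain ⟨w, hw⟩ := h3
    have hnu : H.neighborSet u = {v} := by
      have h1 : ({v} : Set V) ⊆ H.neighborSet u := by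
        intro x hx; rw [Set.mem_singleton_iff] at hx; subst hx; exact huv
      have := Set.eq_of_subset_of_ncard_le h1
        (by rw [show (H.neighborSet u).ncard = dg u from rfl, hu, Set.ncard_singleton])
        (Set.toFinite _)
      exact this.symm
    have hnv : H.neighborSet v = {u} := by
      have h1 : ({u} : Set V) ⊆ H.neighborSet v := by
        intro x hx; rw [Set.mem_singleton_iff] at hx; subst hx; exact huv.symm
      have := Set.eq_of_subset_of_ncard_le h1
        (by rw [show (H.neighborSet v).ncard = dg v from rfl, hv, Set.ncard_singleton])
        (Set.toFinite _)
      exact this.symm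
    have key : ∀ (a b : V) (_ : H.Walk a b), a = u ∨ a = v → b = u ∨ b = v := by
      intro a b p
      induction p with
      | nil => exact id
      | @cons a c b h p ih =>
        intro ha
        apply ih
        rcases ha with rfl | rfl
        · right
          have : c ∈ H.neighborSet a := h
          rwa [hnu, Set.mem_singleton_iff] at this
        · left
          have : c ∈ H.neighborSet a := h
          rwa [hnv, Set.mem_singleton_iff] at this
    have hw' : dg w = 3 := hw
    obtain ⟨p⟩ := hconn.preconnected u w
    rcases key u w p (Or.inl rfl) with rfl | rfl
    · omega
    · omega
  have hfi : Set.InjOn f D1 := by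
    intro u hu v hv hfuv
    by_contra hne
    have hu1 : dg u = 1 := (Finset.mem_filter.1 hu).2
    have hv1 : dg v = 1 := (Finset.mem_filter.1 hv).2
    obtain ⟨huE, humem⟩ := hfmem u hu1
    obtain ⟨_, hvmem⟩ := hfmem v hv1
    rw [← hfuv] at hvmem
    have : f u = s(u, v) := (Sym2.mem_and_mem_iff hne).1 ⟨humem, hvmem⟩
    rw [this] at huE
    exact hnadj u v huE hu1 hv1
  -- the pendant edge set is the image of D1 under f
  set S : Set (Sym2 V) :=
    {e : Sym2 V | e ∈ H.edgeSet ∧ ∃ x ∈ e, (H.neighborSet x).ncard = 1} with hS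
  have hSeq : S.toFinset = D1.image f := by
    ext e
    simp only [Set.mem_toFinset, hS, Set.mem_setOf_eq, Finset.mem_image]
    constructor
    · rintro ⟨heE, x, hxe, hx1⟩
      refine ⟨x, Finset.mem_filter.2 ⟨Finset.mem_univ x, hx1⟩, ?_⟩
      have : e ∈ inc x := (hmemInc x e).2 ⟨heE, hxe⟩
      rw [hfinc x hx1, Finset.mem_singleton] at this
      exact this.symm
    · rintro ⟨v, hv, rfl⟩
      have hv1 : dg v = 1 := (Finset.mem_filter.1 hv).2
      obtain ⟨hE, hm⟩ := hfmem v hv1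
      exact ⟨hE, v, hm, hv1⟩
  have : ∑ᶠ e ∈ S, γ e = ∑ e ∈ S.toFinset, γ e := by
    calc ∑ᶠ e ∈ S, γ e = ∑ᶠ e ∈ (S.toFinset : Set (Sym2 V)), γ e := by
          rw [Set.coe_toFinset]
      _ = ∑ e ∈ S.toFinset, γ e := finsum_mem_coe_finset _ _
  rw [this, hSeq, Finset.sum_image (fun a ha b hb h => hfi ha hb h), hsumD1]

end SnarkPaper
end

section
/- Let H be a simple cubic graph that admits an edge-3-coloring, and let d₁ and d₂ be orthogonal edges of H. Then there exists a positive integer J such that: (i) card ED(H) = 3J (and hence card EC(H) = 18J); (ii) card {δ ∈ ED(H) : d₁ ∼ d₂ in δ} = J; and (iii) for every pair of colors x, y ∈ {a,b,c} (equal or not), card {γ ∈ EC(H) : γ(d₁) = x and γ(d₂) = y} = 2J. -/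
namespace SnarkPaper

open SimpleGraph

variable {V V₁ V₂ : Type*}

-- ## Color basics

lemma mem_colorSet_iff {c : Color} : c ∈ colorSet ↔ c = colA ∨ c = colB ∨ c = colC := by
  simp [colorSet]

lemma colorSet_ne_zero {c : Color} (h : c ∈ colorSet) : c ≠ 0 := by
  rcases mem_colorSet_iff.mp h with rfl | rfl | rfl <;> decide

lemma ncard_colorSet : colorSet.ncard = 3 :=
  Set.ncard_eq_three.mpr ⟨colA, colB, colC, by decide, by decide, by decide, rfl⟩

def swapCol (x y : Color) : Color → Color := fun c => if c = x then y else if c = y then x else c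

lemma swapCol_left (x y : Color) : swapCol x y x = y := by simp [swapCol]

lemma swapCol_right (x y : Color) : swapCol x y y = x := by
  unfold swapCol; split_ifs with h <;> simp_all

lemma swapCol_invol (x y c : Color) : swapCol x y (swapCol x y c) = c := by
  unfold swapCol; split_ifs <;> simp_all

lemma swapCol_mem {x y c : Color} (hx : x ∈ colorSet) (hy : y ∈ colorSet)
    (hc : c ∈ colorSet) : swapCol x y c ∈ colorSet := by
  unfold swapCol; split_ifs <;> assumption

lemma swapCol_eq_of_ne {x y c : Color} (h1 : c ≠ x) (h2 : c ≠ y) : swapCol x y c = c := by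
  simp [swapCol, h1, h2]

lemma swapCol_pair_iff {x y c : Color} : (swapCol x y c = x ∨ swapCol x y c = y) ↔ (c = x ∨ c = y) := by
  unfold swapCol; split_ifs <;> simp_all

lemma swapCol_inj {x y c d : Color} (h : swapCol x y c = swapCol x y d) : c = d := by
  have := congrArg (swapCol x y) h
  rwa [swapCol_invol, swapCol_invol] at this

-- ## EC basics

lemma EC_edge_of_ne_zero {G : SimpleGraph V} {γ : Sym2 V → Color} (h : γ ∈ EC G) {e : Sym2 V}
    (hne : γ e ≠ 0) : e ∈ G.edgeSet := by
  by_contra hc; exact hne (h.2.1 e hc)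

-- ## one edge of each color at a vertex

lemma exists_unique_color_nbr [Fintype V] {H : SimpleGraph V} (hcubic : IsCubic H)
    {γ : Sym2 V → Color} (hγ : γ ∈ EC H) (v : V) {x : Color} (hx : x ∈ colorSet) :
    ∃! w, H.Adj v w ∧ γ s(v, w) = x := by
  classical
  set f : V → Color := fun w => γ s(v, w) with hf
  have hinj : Set.InjOn f (H.neighborSet v) := by
    intro w₁ h₁ w₂ h₂ hfeq
    by_contra hne
    have he₁ : s(v, w₁) ∈ H.edgeSet := h₁
    have he₂ : s(v, w₂) ∈ H.edgeSet := h₂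
    have hediff : s(v, w₁) ≠ s(v, w₂) := by
      intro hc
      rw [Sym2.eq_iff] at hc
      rcases hc with ⟨-, h⟩ | ⟨-, h⟩
      · exact hne h
      · exact H.ne_of_adj h₁ h.symm
    exact hγ.2.2 _ he₁ _ he₂ ⟨hediff, v, by simp⟩ hfeq
  have hmaps : f '' (H.neighborSet v) ⊆ colorSet := by
    rintro c ⟨w, hw, rfl⟩
    exact hγ.1 _ hw
  have himg : f '' (H.neighborSet v) = colorSet := by
    apply Set.eq_of_subset_of_ncard_le hmaps
    rw [Set.ncard_image_of_injOn hinj, hcubic v, ncard_colorSet]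
  have hxmem : x ∈ f '' (H.neighborSet v) := himg ▸ hx
  obtain ⟨w, hw, hfw⟩ := hxmem
  refine ⟨w, ⟨hw, hfw⟩, ?_⟩
  rintro w' ⟨hw', hfw'⟩
  exact hinj hw' hw (by show γ s(v, w') = γ s(v, w); rw [hfw']; exact hfw.symm)


-- ## Kempe subgraph

def kempeG (γ : Sym2 V → Color) (x y : Color) : SimpleGraph V :=
  SimpleGraph.fromEdgeSet {e | γ e = x ∨ γ e = y}

lemma kempeG_adj {H : SimpleGraph V} {γ : Sym2 V → Color} (hγ : γ ∈ EC H)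
    {x y : Color} (hx : x ∈ colorSet) (hy : y ∈ colorSet) {u w : V} :
    (kempeG γ x y).Adj u w ↔ H.Adj u w ∧ (γ s(u, w) = x ∨ γ s(u, w) = y) := by
  rw [kempeG, fromEdgeSet_adj]
  constructor
  · rintro ⟨hc, hne⟩
    refine ⟨?_, hc⟩
    have hnz : γ s(u, w) ≠ 0 := by
      rcases hc with h | h
      · rw [h]; exact colorSet_ne_zero hx
      · rw [h]; exact colorSet_ne_zero hy
    exact (H.mem_edgeSet).mp (EC_edge_of_ne_zero hγ hnz)
  · rintro ⟨hadj, hc⟩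
    exact ⟨hc, H.ne_of_adj hadj⟩

lemma kempeG_le {H : SimpleGraph V} {γ : Sym2 V → Color} (hγ : γ ∈ EC H)
    {x y : Color} (hx : x ∈ colorSet) (hy : y ∈ colorSet) : kempeG γ x y ≤ H := by
  intro u w h
  exact ((kempeG_adj hγ hx hy).mp h).1

lemma kempeG_edge_mem {H : SimpleGraph V} {γ : Sym2 V → Color} (hγ : γ ∈ EC H)
    {x y : Color} (hx : x ∈ colorSet) (hy : y ∈ colorSet) {e : Sym2 V} :
    e ∈ (kempeG γ x y).edgeSet ↔ e ∈ H.edgeSet ∧ (γ e = x ∨ γ e = y) := by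
  induction e using Sym2.ind with
  | _ u w =>
    rw [mem_edgeSet, mem_edgeSet, kempeG_adj hγ hx hy]

lemma kempeG_nbr_ncard [Fintype V] {H : SimpleGraph V} (hcubic : IsCubic H)
    {γ : Sym2 V → Color} (hγ : γ ∈ EC H) {x y : Color} (hx : x ∈ colorSet)
    (hy : y ∈ colorSet) (hxy : x ≠ y) (v : V) :
    ((kempeG γ x y).neighborSet v).ncard = 2 := by
  obtain ⟨wx, ⟨hwx, hwxc⟩, hwxu⟩ := exists_unique_color_nbr hcubic hγ v hx
  obtain ⟨wy, ⟨hwy, hwyc⟩, hwyu⟩ := exists_unique_color_nbr hcubic hγ v hy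
  have hne : wx ≠ wy := by
    rintro rfl
    exact hxy (hwxc.symm.trans hwyc)
  have : (kempeG γ x y).neighborSet v = {wx, wy} := by
    ext w
    rw [mem_neighborSet, kempeG_adj hγ hx hy]
    constructor
    · rintro ⟨hadj, hc | hc⟩
      · exact Or.inl (hwxu w ⟨hadj, hc⟩)
      · exact Or.inr (hwyu w ⟨hadj, hc⟩)
    · rintro (rfl | rfl)
      · exact ⟨hwx, Or.inl hwxc⟩
      · exact ⟨hwy, Or.inr hwyc⟩
  rw [this]
  exact Set.ncard_pair hne


-- ## cycles in low-degree graphs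

lemma cycle_two_edges {K : SimpleGraph V} {a : V} {C : K.Walk a a} (hC : C.IsCycle)
    {v : V} (hv : v ∈ C.support) :
    ∃ w₁ w₂, w₁ ≠ w₂ ∧ s(v, w₁) ∈ C.edges ∧ s(v, w₂) ∈ C.edges := by
  classical
  have hDc : (C.rotate v hv).IsCycle := hC.rotate hv
  have hmem : ∀ e : Sym2 V, e ∈ (C.rotate v hv).edges ↔ e ∈ C.edges :=
    fun e => (C.rotate_edges v hv).mem_iff
  obtain ⟨w₁, h₁, q, hq⟩ := SimpleGraph.Walk.not_nil_iff.mp hDc.not_nil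
  rw [hq] at hDc hmem
  have hcyc := (SimpleGraph.Walk.cons_isCycle_iff q h₁).mp hDc
  have hqlen : 2 ≤ q.length := by
    have h3 := hDc.three_le_length
    simp only [SimpleGraph.Walk.length_cons] at h3
    omega
  have hqnn : ¬ q.reverse.Nil := by
    rw [SimpleGraph.Walk.nil_iff_length_eq, SimpleGraph.Walk.length_reverse]
    omega
  obtain ⟨w₂, h₂, q₂, hq₂⟩ := SimpleGraph.Walk.not_nil_iff.mp hqnn
  have e₂mem : s(v, w₂) ∈ q.edges := by
    have h' : s(v, w₂) ∈ q.reverse.edges := by rw [hq₂]; simp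
    rwa [SimpleGraph.Walk.edges_reverse, List.mem_reverse] at h'
  refine ⟨w₁, w₂, ?_, ?_, ?_⟩
  · rintro rfl
    exact hcyc.2 e₂mem
  · rw [← hmem]; simp
  · rw [← hmem]; simp [e₂mem]

lemma cycle_closed [Fintype V] {K : SimpleGraph V}
    (hdeg : ∀ v : V, (K.neighborSet v).ncard ≤ 2)
    {a : V} {C : K.Walk a a} (hC : C.IsCycle) {v w : V} (hv : v ∈ C.support)
    (hadj : K.Adj v w) : s(v, w) ∈ C.edges := by
  obtain ⟨w₁, w₂, hne, h1, h2⟩ := cycle_two_edges hC hv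
  by_contra hc
  have hw1 : w₁ ∈ K.neighborSet v := C.adj_of_mem_edges h1
  have hw2 : w₂ ∈ K.neighborSet v := C.adj_of_mem_edges h2
  have hww1 : w ≠ w₁ := by rintro rfl; exact hc h1
  have hww2 : w ≠ w₂ := by rintro rfl; exact hc h2
  have hsub : ({w, w₁, w₂} : Set V) ⊆ K.neighborSet v := by
    rintro z (rfl | rfl | rfl)
    · exact hadj
    · exact hw1
    · exact hw2
  have h3 : ({w, w₁, w₂} : Set V).ncard = 3 :=
    Set.ncard_eq_three.mpr ⟨w, w₁, w₂, hww1, hww2, hne, rfl⟩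
  have := Set.ncard_le_ncard hsub (Set.toFinite _)
  rw [h3] at this
  exact absurd (this.trans (hdeg v)) (by omega)

lemma reachable_delete_of_two_regular [Fintype V] {K : SimpleGraph V}
    (hdeg : ∀ v : V, (K.neighborSet v).Nonempty → (K.neighborSet v).ncard = 2)
    {u v : V} (hadj : K.Adj u v) :
    (K \ SimpleGraph.fromEdgeSet {s(u, v)}).Reachable u v := by
  classical
  by_contra hreach
  set K' := K \ SimpleGraph.fromEdgeSet {s(u, v)} with hK'
  have hK'adj : ∀ a b : V, K'.Adj a b ↔ K.Adj a b ∧ s(a, b) ≠ s(u, v) := by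
    intro a b
    rw [hK', sdiff_adj, fromEdgeSet_adj]
    constructor
    · rintro ⟨h1, h2⟩
      exact ⟨h1, fun hh => h2 ⟨hh, h1.ne⟩⟩
    · rintro ⟨h1, h2⟩
      exact ⟨h1, fun hh => h2 hh.1⟩
  set R : Set V := {w | K'.Reachable u w} with hR
  have huR : u ∈ R := Reachable.refl u
  have hvR : v ∉ R := hreach
  have hclosed : ∀ a b : V, K'.Adj a b → a ∈ R → b ∈ R :=
    fun a b h ha => Reachable.trans ha h.reachable
  have huv : u ≠ v := hadj.ne
  set Kr : SimpleGraph R := SimpleGraph.comap Subtype.val K' with hKr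
  have hnbr : ∀ a : R, (Kr.neighborSet a).ncard = (K'.neighborSet a.val).ncard := by
    intro a
    have himg : Subtype.val '' (Kr.neighborSet a) = K'.neighborSet a.val := by
      ext b
      simp only [Set.mem_image, mem_neighborSet, hKr, comap_adj]
      constructor
      · rintro ⟨b', hb', rfl⟩; exact hb'
      · intro hb; exact ⟨⟨b, hclosed _ _ hb a.2⟩, hb, rfl⟩
    rw [← himg, Set.ncard_image_of_injective _ Subtype.val_injective]
  have hdeg' : ∀ a : R, Kr.degree a = (K'.neighborSet a.val).ncard := by
    intro a
    rw [← hnbr a, ← card_neighborSet_eq_degree]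
    rw [Set.ncard_eq_toFinset_card', Set.toFinset_card]
  have hu_one : (K'.neighborSet u).ncard = 1 := by
    have hset : K'.neighborSet u = K.neighborSet u \ {v} := by
      ext b
      simp only [mem_neighborSet, hK'adj, Set.mem_diff, Set.mem_singleton_iff]
      constructor
      · rintro ⟨h1, h2⟩
        exact ⟨h1, by rintro rfl; exact h2 rfl⟩
      · rintro ⟨h1, h2⟩
        refine ⟨h1, fun hh => ?_⟩
        rw [Sym2.eq_iff] at hh
        rcases hh with ⟨-, rfl⟩ | ⟨rfl, rfl⟩
        · exact h2 rfl
        · exact huv rfl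
    rw [hset, Set.ncard_diff_singleton_of_mem (show v ∈ K.neighborSet u from hadj), hdeg u ⟨v, hadj⟩]
  have hother : ∀ a : V, a ∈ R → a ≠ u → (K'.neighborSet a).ncard = 2 := by
    intro a haR hau
    have hav : a ≠ v := by rintro rfl; exact hvR haR
    have heq : K'.neighborSet a = K.neighborSet a := by
      ext b
      simp only [mem_neighborSet, hK'adj]
      refine ⟨fun h => h.1, fun h => ⟨h, fun hh => ?_⟩⟩
      rw [Sym2.eq_iff] at hh
      rcases hh with ⟨rfl, rfl⟩ | ⟨rfl, rfl⟩
      · exact hau rfl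
      · exact hav rfl
    obtain ⟨p⟩ := haR
    have hpnn : ¬ p.reverse.Nil := by
      intro hnil
      rw [SimpleGraph.Walk.nil_iff_length_eq, SimpleGraph.Walk.length_reverse] at hnil
      have := SimpleGraph.Walk.eq_of_length_eq_zero hnil
      exact hau this.symm
    obtain ⟨b, hb, q, hq⟩ := SimpleGraph.Walk.not_nil_iff.mp hpnn
    rw [heq]
    exact hdeg a ⟨b, ((hK'adj a b).mp hb).1⟩
  have hfilter : Finset.filter (fun w : R => Odd (Kr.degree w)) Finset.univ = {(⟨u, huR⟩ : R)} := by
    ext a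
    simp only [Finset.mem_filter, Finset.mem_univ, true_and, Finset.mem_singleton]
    constructor
    · intro hodd
      by_contra hne
      have hau : a.val ≠ u := fun h => hne (Subtype.ext h)
      rw [hdeg' a, hother a.val a.2 hau] at hodd
      exact (Nat.not_even_iff_odd.mpr hodd) (by decide)
    · rintro rfl
      rw [hdeg', hu_one]
      exact odd_one
  have heven := Kr.even_card_odd_degree_vertices
  rw [hfilter] at heven
  simp at heven

lemma exists_cycle_through_both [Fintype V] {K : SimpleGraph V}
    (hdeg : ∀ v : V, (K.neighborSet v).ncard = 2)
    {u₁ v₁ : V} (h₁ : K.Adj u₁ v₁) {d₂ : Sym2 V} (hd₂ : d₂ ∈ K.edgeSet)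
    {w : V} (hw : w ∈ d₂) (hrw : K.Reachable u₁ w) :
    ∃ (a : V) (C : K.Walk a a), C.IsCycle ∧ s(u₁, v₁) ∈ C.edges ∧ d₂ ∈ C.edges := by
  classical
  have hreach := reachable_delete_of_two_regular (fun v _ => hdeg v) h₁
  obtain ⟨a, C, hC, hd₁⟩ := (adj_and_reachable_delete_edges_iff_exists_cycle).mp ⟨h₁, hreach⟩
  have hdle : ∀ v : V, (K.neighborSet v).ncard ≤ 2 := fun v => (hdeg v).le
  have hstep : ∀ {s t : V} (p : K.Walk s t), s ∈ C.support → t ∈ C.support := by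
    intro s t p
    induction p with
    | nil => exact id
    | cons h q ih =>
      intro hs
      have hedge := cycle_closed hdle hC hs h
      exact ih (C.snd_mem_support_of_mem_edges hedge)
  have hu₁ : u₁ ∈ C.support := C.fst_mem_support_of_mem_edges hd₁
  obtain ⟨p⟩ := hrw
  have hwsup : w ∈ C.support := hstep p hu₁
  have hadj2 : K.Adj w (Sym2.Mem.other hw) := by
    rw [← mem_edgeSet, Sym2.other_spec hw]
    exact hd₂
  have := cycle_closed hdle hC hwsup hadj2
  rw [Sym2.other_spec hw] at this
  exact ⟨a, C, hC, hd₁, this⟩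



-- ## common Kempe cycle from reachability

lemma common_cycle [Fintype V] {H : SimpleGraph V} (hcubic : IsCubic H)
    {γ : Sym2 V → Color} (hγ : γ ∈ EC H) {x y : Color} (hx : x ∈ colorSet)
    (hy : y ∈ colorSet) (hxy : x ≠ y) {e f : Sym2 V} (he : e ∈ H.edgeSet)
    (hf : f ∈ H.edgeSet) (hge : γ e = x ∨ γ e = y) (hgf : γ f = x ∨ γ f = y)
    {u w : V} (hu : u ∈ e) (hw : w ∈ f)
    (hr : (kempeG γ x y).Reachable u w) : InCommonKempeCycle H γ e f := by
  classical
  set K := kempeG γ x y with hK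
  have hdeg : ∀ v : V, (K.neighborSet v).ncard = 2 :=
    kempeG_nbr_ncard hcubic hγ hx hy hxy
  have heK : e ∈ K.edgeSet := (kempeG_edge_mem hγ hx hy).mpr ⟨he, hge⟩
  have hfK : f ∈ K.edgeSet := (kempeG_edge_mem hγ hx hy).mpr ⟨hf, hgf⟩
  have hadj1 : K.Adj u (Sym2.Mem.other hu) := by
    rw [← mem_edgeSet, Sym2.other_spec hu]; exact heK
  obtain ⟨a, C, hC, hd₁, hd₂⟩ := exists_cycle_through_both hdeg hadj1 hfK hw hr
  rw [Sym2.other_spec hu] at hd₁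
  have hsub : ∀ e' ∈ C.edges, e' ∈ H.edgeSet := by
    intro e' he'
    exact ((kempeG_edge_mem hγ hx hy).mp (C.edges_subset_edgeSet he')).1
  refine ⟨x, hx, y, hy, hxy, a, C.transfer H hsub, hC.transfer hsub, ?_, ?_, ?_⟩
  · intro e' he'
    rw [SimpleGraph.Walk.edges_transfer] at he'
    exact ((kempeG_edge_mem hγ hx hy).mp (C.edges_subset_edgeSet he')).2
  · rw [SimpleGraph.Walk.edges_transfer]; exact hd₁
  · rw [SimpleGraph.Walk.edges_transfer]; exact hd₂

-- ## Kempe swap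

open scoped Classical in
noncomputable def kSwap (γ : Sym2 V → Color) (x y : Color) (u : V) : Sym2 V → Color :=
  fun e => if (γ e = x ∨ γ e = y) ∧ ∃ w ∈ e, (kempeG γ x y).Reachable u w
           then swapCol x y (γ e) else γ e

lemma kSwap_eq_of_cond {γ : Sym2 V → Color} {x y : Color} {u : V} {e : Sym2 V}
    (h : (γ e = x ∨ γ e = y) ∧ ∃ w ∈ e, (kempeG γ x y).Reachable u w) :
    kSwap γ x y u e = swapCol x y (γ e) := by
  rw [kSwap, if_pos h]

lemma kSwap_eq_of_not_cond {γ : Sym2 V → Color} {x y : Color} {u : V} {e : Sym2 V}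
    (h : ¬ ((γ e = x ∨ γ e = y) ∧ ∃ w ∈ e, (kempeG γ x y).Reachable u w)) :
    kSwap γ x y u e = γ e := by
  rw [kSwap, if_neg h]

/-- Both endpoints of a Kempe edge are reachable if one is. -/
lemma reach_other {γ : Sym2 V → Color} {x y : Color} {u : V} {e : Sym2 V}
    (he : e ∈ (kempeG γ x y).edgeSet) {w z : V} (hw : w ∈ e) (hz : z ∈ e)
    (hr : (kempeG γ x y).Reachable u w) : (kempeG γ x y).Reachable u z := by
  induction e using Sym2.ind with
  | _ a b =>
    rw [mem_edgeSet] at he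
    rw [Sym2.mem_iff] at hw hz
    rcases hw with rfl | rfl <;> rcases hz with rfl | rfl
    · exact hr
    · exact hr.trans he.reachable
    · exact hr.trans he.symm.reachable
    · exact hr

lemma kSwap_mem_EC [Fintype V] {H : SimpleGraph V} {γ : Sym2 V → Color} (hγ : γ ∈ EC H)
    {x y : Color} (hx : x ∈ colorSet) (hy : y ∈ colorSet) (u : V) :
    kSwap γ x y u ∈ EC H := by
  classical
  refine ⟨?_, ?_, ?_⟩
  · intro e he
    by_cases h : (γ e = x ∨ γ e = y) ∧ ∃ w ∈ e, (kempeG γ x y).Reachable u w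
    · rw [kSwap_eq_of_cond h]
      exact swapCol_mem hx hy (hγ.1 e he)
    · rw [kSwap_eq_of_not_cond h]
      exact hγ.1 e he
  · intro e he
    have h0 : γ e = 0 := hγ.2.1 e he
    have : ¬ ((γ e = x ∨ γ e = y) ∧ ∃ w ∈ e, (kempeG γ x y).Reachable u w) := by
      rintro ⟨hc, -⟩
      rcases hc with hc | hc
      · exact colorSet_ne_zero hx (by rw [← hc, h0])
      · exact colorSet_ne_zero hy (by rw [← hc, h0])
    rw [kSwap_eq_of_not_cond this, h0]
  · intro e he f hf hadj
    have key : ∀ e' f' : Sym2 V, e' ∈ H.edgeSet → f' ∈ H.edgeSet → EdgesAdj e' f' →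
        ((γ e' = x ∨ γ e' = y) ∧ ∃ w ∈ e', (kempeG γ x y).Reachable u w) →
        ¬ ((γ f' = x ∨ γ f' = y) ∧ ∃ w ∈ f', (kempeG γ x y).Reachable u w) →
        kSwap γ x y u e' ≠ kSwap γ x y u f' := by
      intro e' f' he' hf' hadj' hce hcf
      rw [kSwap_eq_of_cond hce, kSwap_eq_of_not_cond hcf]
      -- f' is not colored x or y, else it would satisfy the condition
      have hfno : ¬ (γ f' = x ∨ γ f' = y) := by
        intro hgf
        apply hcf
        refine ⟨hgf, ?_⟩
        obtain ⟨z, hze, hzf⟩ := hadj'.2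
        obtain ⟨w, hwe, hwr⟩ := hce.2
        have heK : e' ∈ (kempeG γ x y).edgeSet := (kempeG_edge_mem hγ hx hy).mpr ⟨he', hce.1⟩
        exact ⟨z, hzf, reach_other heK hwe hze hwr⟩
      intro hc
      apply hfno
      rw [← hc]
      exact swapCol_pair_iff.mpr hce.1
    by_cases hce : (γ e = x ∨ γ e = y) ∧ ∃ w ∈ e, (kempeG γ x y).Reachable u w
      <;> by_cases hcf : (γ f = x ∨ γ f = y) ∧ ∃ w ∈ f, (kempeG γ x y).Reachable u w
    · rw [kSwap_eq_of_cond hce, kSwap_eq_of_cond hcf]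
      intro hc
      exact hγ.2.2 e he f hf hadj (swapCol_inj hc)
    · exact key e f he hf hadj hce hcf
    · exact fun hc => key f e hf he ⟨hadj.1.symm, by obtain ⟨z, h1, h2⟩ := hadj.2; exact ⟨z, h2, h1⟩⟩ hcf hce hc.symm
    · rw [kSwap_eq_of_not_cond hce, kSwap_eq_of_not_cond hcf]
      exact hγ.2.2 e he f hf hadj


lemma kSwap_pair_iff {γ : Sym2 V → Color} {x y : Color} {u : V} (e : Sym2 V) :
    (kSwap γ x y u e = x ∨ kSwap γ x y u e = y) ↔ (γ e = x ∨ γ e = y) := by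
  by_cases h : (γ e = x ∨ γ e = y) ∧ ∃ w ∈ e, (kempeG γ x y).Reachable u w
  · rw [kSwap_eq_of_cond h, swapCol_pair_iff]
  · rw [kSwap_eq_of_not_cond h]

lemma kempeG_kSwap {γ : Sym2 V → Color} {x y : Color} {u : V} :
    kempeG (kSwap γ x y u) x y = kempeG γ x y := by
  unfold kempeG
  congr 1
  ext e
  exact kSwap_pair_iff e

lemma kSwap_invol {γ : Sym2 V → Color} {x y : Color} {u : V} :
    kSwap (kSwap γ x y u) x y u = γ := by
  funext e
  by_cases h : (γ e = x ∨ γ e = y) ∧ ∃ w ∈ e, (kempeG γ x y).Reachable u w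
  · have h' : (kSwap γ x y u e = x ∨ kSwap γ x y u e = y) ∧
        ∃ w ∈ e, (kempeG (kSwap γ x y u) x y).Reachable u w := by
      rw [kempeG_kSwap, kSwap_pair_iff]
      exact h
    rw [kSwap_eq_of_cond h', kSwap_eq_of_cond h, swapCol_invol]
  · have h' : ¬ ((kSwap γ x y u e = x ∨ kSwap γ x y u e = y) ∧
        ∃ w ∈ e, (kempeG (kSwap γ x y u) x y).Reachable u w) := by
      rw [kempeG_kSwap, kSwap_pair_iff]
      exact h
    rw [kSwap_eq_of_not_cond h', kSwap_eq_of_not_cond h]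

lemma kSwap_fst {γ : Sym2 V → Color} {x y : Color} {u : V} {e : Sym2 V}
    (hu : u ∈ e) (hge : γ e = x ∨ γ e = y) :
    kSwap γ x y u e = swapCol x y (γ e) :=
  kSwap_eq_of_cond ⟨hge, u, hu, Reachable.refl u⟩

lemma kSwap_other [Fintype V] {H : SimpleGraph V} (hcubic : IsCubic H)
    {γ : Sym2 V → Color} (hγ : γ ∈ EC H) {x y : Color} (hx : x ∈ colorSet)
    (hy : y ∈ colorSet) (hxy : x ≠ y) {e f : Sym2 V} (he : e ∈ H.edgeSet)
    (hf : f ∈ H.edgeSet) {u : V} (hu : u ∈ e) (hge : γ e = x ∨ γ e = y)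
    (hno : ¬ InCommonKempeCycle H γ e f) : kSwap γ x y u f = γ f := by
  by_cases h : (γ f = x ∨ γ f = y) ∧ ∃ w ∈ f, (kempeG γ x y).Reachable u w
  · obtain ⟨hgf, w, hwf, hr⟩ := h
    exact absurd (common_cycle hcubic hγ hx hy hxy he hf hge hgf hu hwf hr) hno
  · exact kSwap_eq_of_not_cond h


-- ## counting helpers

lemma ncard_fiber_sum {α β : Type*} [DecidableEq β] {S : Set α} (hS : S.Finite) (t : Finset β)
    (f : α → β) (hf : ∀ a ∈ S, f a ∈ t) :
    S.ncard = ∑ b ∈ t, {a ∈ S | f a = b}.ncard := by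
  classical
  rw [Set.ncard_eq_toFinset_card _ hS]
  rw [Finset.card_eq_sum_card_fiberwise (f := f) (t := t)
    (fun a ha => hf a (hS.mem_toFinset.mp ha))]
  refine Finset.sum_congr rfl fun b _ => ?_
  rw [← Set.ncard_coe_finset]
  congr 1
  ext a
  simp [Set.Finite.mem_toFinset]

lemma inCommonKempeCycle_symm {G : SimpleGraph V} {γ : Sym2 V → Color} {e f : Sym2 V}
    (h : InCommonKempeCycle G γ e f) : InCommonKempeCycle G γ f e := by
  obtain ⟨x, hx, y, hy, hxy, a, C, hC, hcol, h1, h2⟩ := h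
  exact ⟨x, hx, y, hy, hxy, a, C, hC, hcol, h2, h1⟩

-- ## the nine classes have equal cardinality

lemma class_card_fst [Fintype V] {H : SimpleGraph V} (hcubic : IsCubic H)
    {d₁ d₂ : Sym2 V} (horth : OrthogonalEdges H d₁ d₂)
    {x x' : Color} (y : Color) (hx : x ∈ colorSet) (hx' : x' ∈ colorSet) :
    {γ ∈ EC H | γ d₁ = x ∧ γ d₂ = y}.ncard = {γ ∈ EC H | γ d₁ = x' ∧ γ d₂ = y}.ncard := by
  classical
  obtain ⟨u, hu⟩ : ∃ u, u ∈ d₁ := by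
    induction d₁ using Sym2.ind with
    | _ a b => exact ⟨a, by simp⟩
  by_cases hxx : x = x'
  · subst hxx; rfl
  have key : ∀ x₁ x₂ : Color, x₁ ∈ colorSet → x₂ ∈ colorSet → x₁ ≠ x₂ →
      {γ ∈ EC H | γ d₁ = x₁ ∧ γ d₂ = y}.ncard ≤ {γ ∈ EC H | γ d₁ = x₂ ∧ γ d₂ = y}.ncard := by
    intro x₁ x₂ hx₁ hx₂ hne
    apply Set.ncard_le_ncard_of_injOn (fun γ => kSwap γ x₁ x₂ u)
    · rintro γ ⟨hγ, h1, h2⟩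
      refine ⟨kSwap_mem_EC hγ hx₁ hx₂ u, ?_, ?_⟩
      · show kSwap γ x₁ x₂ u d₁ = x₂
        rw [kSwap_fst hu (Or.inl h1), h1, swapCol_left]
      · show kSwap γ x₁ x₂ u d₂ = y
        rw [kSwap_other hcubic hγ hx₁ hx₂ hne horth.1 horth.2.1 hu (Or.inl h1)
          (horth.2.2 γ hγ)]
        exact h2
    · intro a _ b _ hab
      have := congrArg (fun γ => kSwap γ x₁ x₂ u) hab
      simpa only [kSwap_invol] using this
  exact le_antisymm (key x x' hx hx' hxx) (key x' x hx' hx (Ne.symm hxx))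

lemma class_card_snd [Fintype V] {H : SimpleGraph V} (hcubic : IsCubic H)
    {d₁ d₂ : Sym2 V} (horth : OrthogonalEdges H d₁ d₂)
    (x : Color) {y y' : Color} (hy : y ∈ colorSet) (hy' : y' ∈ colorSet) :
    {γ ∈ EC H | γ d₁ = x ∧ γ d₂ = y}.ncard = {γ ∈ EC H | γ d₁ = x ∧ γ d₂ = y'}.ncard := by
  classical
  obtain ⟨u, hu⟩ : ∃ u, u ∈ d₂ := by
    induction d₂ using Sym2.ind with
    | _ a b => exact ⟨a, by simp⟩
  by_cases hyy : y = y'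
  · subst hyy; rfl
  have key : ∀ y₁ y₂ : Color, y₁ ∈ colorSet → y₂ ∈ colorSet → y₁ ≠ y₂ →
      {γ ∈ EC H | γ d₁ = x ∧ γ d₂ = y₁}.ncard ≤ {γ ∈ EC H | γ d₁ = x ∧ γ d₂ = y₂}.ncard := by
    intro y₁ y₂ hy₁ hy₂ hne
    apply Set.ncard_le_ncard_of_injOn (fun γ => kSwap γ y₁ y₂ u)
    · rintro γ ⟨hγ, h1, h2⟩
      refine ⟨kSwap_mem_EC hγ hy₁ hy₂ u, ?_, ?_⟩
      · show kSwap γ y₁ y₂ u d₁ = x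
        rw [kSwap_other hcubic hγ hy₁ hy₂ hne horth.2.1 horth.1 hu (Or.inl h2)
          (fun hc => horth.2.2 γ hγ (inCommonKempeCycle_symm hc))]
        exact h1
      · show kSwap γ y₁ y₂ u d₂ = y₂
        rw [kSwap_fst hu (Or.inl h2), h2, swapCol_left]
    · intro a _ b _ hab
      have := congrArg (fun γ => kSwap γ y₁ y₂ u) hab
      simpa only [kSwap_invol] using this
  exact le_antisymm (key y y' hy hy' hyy) (key y' y hy' hy (Ne.symm hyy))



-- ## the decomposition attached to a coloring

def colorClass (H : SimpleGraph V) (γ : Sym2 V → Color) (x : Color) : Set (Sym2 V) :=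
  {e | e ∈ H.edgeSet ∧ γ e = x}

def decompOf (H : SimpleGraph V) (γ : Sym2 V → Color) : Set (Set (Sym2 V)) :=
  colorClass H γ '' colorSet

lemma decompOf_mem_ED [Fintype V] [Nonempty V] {H : SimpleGraph V} (hcubic : IsCubic H)
    {γ : Sym2 V → Color} (hγ : γ ∈ EC H) : decompOf H γ ∈ ED H := by
  classical
  have hclass_ne : ∀ x ∈ colorSet, (colorClass H γ x).Nonempty := by
    intro x hx
    obtain ⟨w, ⟨hw, hc⟩, -⟩ := exists_unique_color_nbr hcubic hγ (Classical.arbitrary V) hx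
    exact ⟨s(Classical.arbitrary V, w), hw, hc⟩
  refine ⟨?_, ?_, ?_, ?_⟩
  · have hinj : Set.InjOn (colorClass H γ) colorSet := by
      intro x hx x' hx' heq
      obtain ⟨e, he, hce⟩ := hclass_ne x hx
      have : e ∈ colorClass H γ x' := heq ▸ ⟨he, hce⟩
      rw [← hce, this.2]
    rw [decompOf, Set.ncard_image_of_injOn hinj, ncard_colorSet]
  · rintro s ⟨x, hx, rfl⟩ e he
    exact he.1
  · intro e he
    refine ⟨colorClass H γ (γ e), ⟨⟨γ e, hγ.1 e he, rfl⟩, he, rfl⟩, ?_⟩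
    rintro s ⟨⟨x, hx, rfl⟩, hes⟩
    rw [hes.2]
  · rintro s ⟨x, hx, rfl⟩ e he f hf hadj
    exact hγ.2.2 e he.1 f hf.1 hadj (he.2.trans hf.2.symm)

lemma decompOf_same_iff {H : SimpleGraph V} {γ : Sym2 V → Color} (hγ : γ ∈ EC H)
    {d₁ d₂ : Sym2 V} (hd₁ : d₁ ∈ H.edgeSet) (hd₂ : d₂ ∈ H.edgeSet) :
    SameClass (decompOf H γ) d₁ d₂ ↔ γ d₁ = γ d₂ := by
  constructor
  · rintro ⟨s, ⟨x, hx, rfl⟩, h1, h2⟩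
    rw [h1.2, h2.2]
  · intro h
    exact ⟨colorClass H γ (γ d₁), ⟨γ d₁, hγ.1 _ hd₁, rfl⟩, ⟨hd₁, rfl⟩, ⟨hd₂, h.symm⟩⟩


lemma decompOf_fiber_card [Fintype V] [Nonempty V] {H : SimpleGraph V} (hcubic : IsCubic H)
    {δ : Set (Set (Sym2 V))} (hδ : δ ∈ ED H) :
    {γ ∈ EC H | decompOf H γ = δ}.ncard = 6 := by
  classical
  obtain ⟨hδ3, hδsub, hδuniq, hδadj⟩ := hδ
  have hexcl : ∀ (e : Sym2 V) (s s' : Set (Sym2 V)),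
      s ∈ δ → s' ∈ δ → e ∈ s → e ∈ s' → s = s' := by
    intro e s s' hs hs' hes hes'
    obtain ⟨sS, -, hsSu⟩ := hδuniq e (hδsub s hs hes)
    rw [hsSu s ⟨hs, hes⟩, hsSu s' ⟨hs', hes'⟩]
  set v₀ : V := Classical.arbitrary V with hv₀
  obtain ⟨w₁, w₂, w₃, h12, h13, h23, hnbr⟩ := Set.ncard_eq_three.mp (hcubic v₀)
  have hadjall : ∀ w ∈ ({w₁, w₂, w₃} : Set V), H.Adj v₀ w := fun w hw => by
    rw [← hnbr] at hw; exact hw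
  have hadj₁ : H.Adj v₀ w₁ := hadjall w₁ (by simp)
  have hadj₂ : H.Adj v₀ w₂ := hadjall w₂ (by simp)
  have hadj₃ : H.Adj v₀ w₃ := hadjall w₃ (by simp)
  have hedist : ∀ {a b : V}, H.Adj v₀ a → a ≠ b → s(v₀, a) ≠ s(v₀, b) := by
    intro a b ha hab hc
    rw [Sym2.eq_iff] at hc
    rcases hc with ⟨-, h⟩ | ⟨-, h⟩
    · exact hab h
    · exact (H.ne_of_adj ha) h.symm
  have headj : ∀ {a b : V}, s(v₀, a) ≠ s(v₀, b) → EdgesAdj s(v₀, a) s(v₀, b) :=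
    fun h => ⟨h, v₀, by simp, by simp⟩
  obtain ⟨s₁, ⟨hs₁δ, hs₁e⟩, -⟩ := hδuniq s(v₀, w₁) hadj₁
  obtain ⟨s₂, ⟨hs₂δ, hs₂e⟩, -⟩ := hδuniq s(v₀, w₂) hadj₂
  obtain ⟨s₃, ⟨hs₃δ, hs₃e⟩, -⟩ := hδuniq s(v₀, w₃) hadj₃
  have hs12 : s₁ ≠ s₂ := fun h =>
    hδadj s₂ hs₂δ _ (h ▸ hs₁e) _ hs₂e (headj (hedist hadj₁ h12))
  have hs13 : s₁ ≠ s₃ := fun h =>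
    hδadj s₃ hs₃δ _ (h ▸ hs₁e) _ hs₃e (headj (hedist hadj₁ h13))
  have hs23 : s₂ ≠ s₃ := fun h =>
    hδadj s₃ hs₃δ _ (h ▸ hs₂e) _ hs₃e (headj (hedist hadj₂ h23))
  have hδeq : δ = {s₁, s₂, s₃} := by
    refine (Set.eq_of_subset_of_ncard_le ?_ ?_ (Set.toFinite _)).symm
    · rintro s (rfl | rfl | rfl) <;> assumption
    · rw [hδ3, Set.ncard_eq_three.mpr ⟨s₁, s₂, s₃, hs12, hs13, hs23, rfl⟩]
  have hcover : ∀ e ∈ H.edgeSet, e ∈ s₁ ∨ e ∈ s₂ ∨ e ∈ s₃ := by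
    intro e he
    obtain ⟨s, ⟨hsδ, hes⟩, -⟩ := hδuniq e he
    rw [hδeq] at hsδ
    rcases hsδ with rfl | rfl | rfl
    · exact Or.inl hes
    · exact Or.inr (Or.inl hes)
    · exact Or.inr (Or.inr hes)
  have hval : ∀ γ ∈ EC H, decompOf H γ = δ →
      ∀ s ∈ δ, ∀ ea ∈ s, ∀ e ∈ s, γ e = γ ea := by
    intro γ _ hFδ s hs ea hea e hes
    rw [← hFδ] at hs
    obtain ⟨x, -, rfl⟩ := hs
    rw [hes.2, hea.2]
  set T : Finset (Color × Color × Color) := Finset.univ.filter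
    (fun t => (t.1 = colA ∨ t.1 = colB ∨ t.1 = colC) ∧
              (t.2.1 = colA ∨ t.2.1 = colB ∨ t.2.1 = colC) ∧
              (t.2.2 = colA ∨ t.2.2 = colB ∨ t.2.2 = colC) ∧
              t.1 ≠ t.2.1 ∧ t.1 ≠ t.2.2 ∧ t.2.1 ≠ t.2.2) with hT
  have hTcard : T.card = 6 := by rw [hT]; decide
  have hTmem : ∀ t : Color × Color × Color, t ∈ (↑T : Set (Color × Color × Color)) ↔
      t.1 ∈ colorSet ∧ t.2.1 ∈ colorSet ∧ t.2.2 ∈ colorSet ∧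
      t.1 ≠ t.2.1 ∧ t.1 ≠ t.2.2 ∧ t.2.1 ≠ t.2.2 := by
    intro t
    rw [Finset.mem_coe, hT, Finset.mem_filter]
    simp only [Finset.mem_univ, true_and, mem_colorSet_iff]
  have hle1 : {γ ∈ EC H | decompOf H γ = δ}.ncard ≤
      (↑T : Set (Color × Color × Color)).ncard := by
    apply Set.ncard_le_ncard_of_injOn
      (fun γ => (γ s(v₀, w₁), γ s(v₀, w₂), γ s(v₀, w₃)))
    · rintro γ ⟨hγ, -⟩
      rw [hTmem]
      refine ⟨hγ.1 _ hadj₁, hγ.1 _ hadj₂, hγ.1 _ hadj₃, ?_, ?_, ?_⟩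
      · exact hγ.2.2 _ hadj₁ _ hadj₂ (headj (hedist hadj₁ h12))
      · exact hγ.2.2 _ hadj₁ _ hadj₃ (headj (hedist hadj₁ h13))
      · exact hγ.2.2 _ hadj₂ _ hadj₃ (headj (hedist hadj₂ h23))
    · rintro a ⟨ha, haδ⟩ b ⟨hb, hbδ⟩ heq
      have q1 : a s(v₀, w₁) = b s(v₀, w₁) := congrArg Prod.fst heq
      have q2 : a s(v₀, w₂) = b s(v₀, w₂) := congrArg (fun p => p.2.1) heq
      have q3 : a s(v₀, w₃) = b s(v₀, w₃) := congrArg (fun p => p.2.2) heq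
      funext e
      by_cases he : e ∈ H.edgeSet
      · rcases hcover e he with h | h | h
        · rw [hval a ha haδ s₁ hs₁δ _ hs₁e e h, hval b hb hbδ s₁ hs₁δ _ hs₁e e h, q1]
        · rw [hval a ha haδ s₂ hs₂δ _ hs₂e e h, hval b hb hbδ s₂ hs₂δ _ hs₂e e h, q2]
        · rw [hval a ha haδ s₃ hs₃δ _ hs₃e e h, hval b hb hbδ s₃ hs₃δ _ hs₃e e h, q3]
      · rw [ha.2.1 e he, hb.2.1 e he]
  set build : Color × Color × Color → (Sym2 V → Color) := fun t e =>
    if e ∈ s₁ then t.1 else if e ∈ s₂ then t.2.1 else if e ∈ s₃ then t.2.2 else 0 with hbuild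
  have hbv1 : ∀ t, ∀ e ∈ s₁, build t e = t.1 := by
    intro t e he; simp only [hbuild, if_pos he]
  have hbv2 : ∀ t, ∀ e ∈ s₂, build t e = t.2.1 := by
    intro t e he
    have h1 : e ∉ s₁ := fun h => hs12 (hexcl e s₁ s₂ hs₁δ hs₂δ h he)
    simp only [hbuild, if_neg h1, if_pos he]
  have hbv3 : ∀ t, ∀ e ∈ s₃, build t e = t.2.2 := by
    intro t e he
    have h1 : e ∉ s₁ := fun h => hs13 (hexcl e s₁ s₃ hs₁δ hs₃δ h he)
    have h2 : e ∉ s₂ := fun h => hs23 (hexcl e s₂ s₃ hs₂δ hs₃δ h he)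
    simp only [hbuild, if_neg h1, if_neg h2, if_pos he]
  have hbv0 : ∀ t, ∀ e ∉ H.edgeSet, build t e = 0 := by
    intro t e he
    have h1 : e ∉ s₁ := fun h => he (hδsub s₁ hs₁δ h)
    have h2 : e ∉ s₂ := fun h => he (hδsub s₂ hs₂δ h)
    have h3 : e ∉ s₃ := fun h => he (hδsub s₃ hs₃δ h)
    simp only [hbuild, if_neg h1, if_neg h2, if_neg h3]
  have hmem : ∀ t : Color × Color × Color, t.1 ∈ colorSet → t.2.1 ∈ colorSet →
      t.2.2 ∈ colorSet → t.1 ≠ t.2.1 → t.1 ≠ t.2.2 → t.2.1 ≠ t.2.2 →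
      build t ∈ EC H ∧ decompOf H (build t) = δ := by
    intro t tc1 tc2 tc3 td12 td13 td23
    have hEC : build t ∈ EC H := by
      refine ⟨?_, hbv0 t, ?_⟩
      · intro e he
        rcases hcover e he with h | h | h
        · rw [hbv1 t e h]; exact tc1
        · rw [hbv2 t e h]; exact tc2
        · rw [hbv3 t e h]; exact tc3
      · intro e he f hf hadj
        rcases hcover e he with h | h | h <;> rcases hcover f hf with h' | h' | h'
        · exact absurd hadj (hδadj s₁ hs₁δ e h f h')
        · rw [hbv1 t e h, hbv2 t f h']; exact td12
        · rw [hbv1 t e h, hbv3 t f h']; exact td13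
        · rw [hbv2 t e h, hbv1 t f h']; exact (Ne.symm td12)
        · exact absurd hadj (hδadj s₂ hs₂δ e h f h')
        · rw [hbv2 t e h, hbv3 t f h']; exact td23
        · rw [hbv3 t e h, hbv1 t f h']; exact (Ne.symm td13)
        · rw [hbv3 t e h, hbv2 t f h']; exact (Ne.symm td23)
        · exact absurd hadj (hδadj s₃ hs₃δ e h f h')
    refine ⟨hEC, ?_⟩
    have hcls1 : colorClass H (build t) t.1 = s₁ := by
      ext e
      constructor
      · rintro ⟨he, hce⟩
        rcases hcover e he with h | h | h
        · exact h
        · rw [hbv2 t e h] at hce; exact absurd hce.symm td12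
        · rw [hbv3 t e h] at hce; exact absurd hce.symm td13
      · intro h
        exact ⟨hδsub s₁ hs₁δ h, hbv1 t e h⟩
    have hcls2 : colorClass H (build t) t.2.1 = s₂ := by
      ext e
      constructor
      · rintro ⟨he, hce⟩
        rcases hcover e he with h | h | h
        · rw [hbv1 t e h] at hce; exact absurd hce td12
        · exact h
        · rw [hbv3 t e h] at hce; exact absurd hce.symm td23
      · intro h
        exact ⟨hδsub s₂ hs₂δ h, hbv2 t e h⟩
    have hcls3 : colorClass H (build t) t.2.2 = s₃ := by
      ext e
      constructor
      · rintro ⟨he, hce⟩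
        rcases hcover e he with h | h | h
        · rw [hbv1 t e h] at hce; exact absurd hce td13
        · rw [hbv2 t e h] at hce; exact absurd hce td23
        · exact h
      · intro h
        exact ⟨hδsub s₃ hs₃δ h, hbv3 t e h⟩
    have hcolorSet_eq : colorSet = {t.1, t.2.1, t.2.2} := by
      refine (Set.eq_of_subset_of_ncard_le ?_ ?_ (Set.toFinite _)).symm
      · rintro c (rfl | rfl | rfl) <;> assumption
      · rw [ncard_colorSet, Set.ncard_eq_three.mpr ⟨t.1, t.2.1, t.2.2, td12, td13, td23, rfl⟩]
    rw [decompOf, hcolorSet_eq, Set.image_insert_eq, Set.image_insert_eq,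
      Set.image_singleton, hcls1, hcls2, hcls3, hδeq]
  have hle2 : (↑T : Set (Color × Color × Color)).ncard ≤
      {γ ∈ EC H | decompOf H γ = δ}.ncard := by
    apply Set.ncard_le_ncard_of_injOn build
    · intro t ht
      rw [hTmem] at ht
      obtain ⟨tc1, tc2, tc3, td12, td13, td23⟩ := ht
      exact hmem t tc1 tc2 tc3 td12 td13 td23
    · intro a ha b hb heq
      have q1 : a.1 = b.1 := by
        rw [← hbv1 a _ hs₁e, ← hbv1 b _ hs₁e, heq]
      have q2 : a.2.1 = b.2.1 := by
        rw [← hbv2 a _ hs₂e, ← hbv2 b _ hs₂e, heq]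
      have q3 : a.2.2 = b.2.2 := by
        rw [← hbv3 a _ hs₃e, ← hbv3 b _ hs₃e, heq]
      exact Prod.ext q1 (Prod.ext q2 q3)
  have hfinal : {γ ∈ EC H | decompOf H γ = δ}.ncard =
      (↑T : Set (Color × Color × Color)).ncard := le_antisymm hle1 hle2
  rw [hfinal, Set.ncard_coe_finset, hTcard]



/-- **Kászonyi, Theorem 3.3(A).** If `H` is a connected cubic edge-3-colorable graph with
orthogonal edges `d₁`, `d₂`, then there is a positive integer `J` with
`card ED(H) = 3J`, `card EC(H) = 18J`, `card {δ ∈ ED(H) : d₁ ∼ d₂} = J`, and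
`card {γ ∈ EC(H) : γ(d₁) = x, γ(d₂) = y} = 2J` for all colors `x`, `y`. -/
theorem statement_1 {V : Type*} [Fintype V] (H : SimpleGraph V)
    (hconn : H.Connected) (hcubic : IsCubic H) (hcol : (EC H).Nonempty)
    (d₁ d₂ : Sym2 V) (horth : OrthogonalEdges H d₁ d₂) :
    ∃ J : ℕ, 0 < J ∧ (ED H).ncard = 3 * J ∧ (EC H).ncard = 18 * J ∧
      {D ∈ ED H | SameClass D d₁ d₂}.ncard = J ∧
      ∀ x ∈ colorSet, ∀ y ∈ colorSet,
        {γ ∈ EC H | γ d₁ = x ∧ γ d₂ = y}.ncard = 2 * J := by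
  classical
  have hV : Nonempty V := hconn.nonempty
  have hd₁ : d₁ ∈ H.edgeSet := horth.1
  have hd₂ : d₂ ∈ H.edgeSet := horth.2.1
  have hcA : colA ∈ colorSet := mem_colorSet_iff.mpr (Or.inl rfl)
  have hcB : colB ∈ colorSet := mem_colorSet_iff.mpr (Or.inr (Or.inl rfl))
  have hcC : colC ∈ colorSet := mem_colorSet_iff.mpr (Or.inr (Or.inr rfl))
  have hECfin : (EC H).Finite := Set.toFinite _
  have hEDfin : (ED H).Finite := Set.toFinite _
  set N : ℕ := {γ ∈ EC H | γ d₁ = colA ∧ γ d₂ = colA}.ncard with hN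
  have hclassN : ∀ x ∈ colorSet, ∀ y ∈ colorSet,
      {γ ∈ EC H | γ d₁ = x ∧ γ d₂ = y}.ncard = N := by
    intro x hx y hy
    rw [class_card_fst hcubic horth y hx hcA, class_card_snd hcubic horth colA hy hcA]
  -- |EC H| = 9 N
  have hEC9 : (EC H).ncard = 9 * N := by
    set t9 : Finset (Color × Color) := Finset.univ.filter
      (fun p => (p.1 = colA ∨ p.1 = colB ∨ p.1 = colC) ∧
                (p.2 = colA ∨ p.2 = colB ∨ p.2 = colC)) with ht9
    have hf : ∀ γ ∈ EC H, (γ d₁, γ d₂) ∈ t9 := by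
      intro γ hγ
      rw [ht9, Finset.mem_filter]
      exact ⟨Finset.mem_univ _, mem_colorSet_iff.mp (hγ.1 d₁ hd₁),
        mem_colorSet_iff.mp (hγ.1 d₂ hd₂)⟩
    rw [ncard_fiber_sum hECfin t9 (fun γ => (γ d₁, γ d₂)) hf]
    have hfib : ∀ p ∈ t9, {γ ∈ EC H | (γ d₁, γ d₂) = p}.ncard = N := by
      intro p hp
      rw [ht9, Finset.mem_filter] at hp
      have hseteq : {γ ∈ EC H | (γ d₁, γ d₂) = p} =
          {γ ∈ EC H | γ d₁ = p.1 ∧ γ d₂ = p.2} := by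
        ext γ
        simp [Prod.ext_iff]
      rw [hseteq]
      exact hclassN p.1 (mem_colorSet_iff.mpr hp.2.1) p.2 (mem_colorSet_iff.mpr hp.2.2)
    rw [Finset.sum_congr rfl hfib, Finset.sum_const, smul_eq_mul]
    have ht9card : t9.card = 9 := by rw [ht9]; decide
    rw [ht9card]
  -- |EC H| = 6 |ED H|
  have hEC6 : (EC H).ncard = 6 * (ED H).ncard := by
    have hf : ∀ γ ∈ EC H, decompOf H γ ∈ hEDfin.toFinset := fun γ hγ =>
      hEDfin.mem_toFinset.mpr (decompOf_mem_ED hcubic hγ)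
    rw [ncard_fiber_sum hECfin hEDfin.toFinset (decompOf H) hf]
    have hfib : ∀ δ ∈ hEDfin.toFinset, {γ ∈ EC H | decompOf H γ = δ}.ncard = 6 := fun δ hδ =>
      decompOf_fiber_card hcubic (hEDfin.mem_toFinset.mp hδ)
    rw [Finset.sum_congr rfl hfib, Finset.sum_const, smul_eq_mul,
      ← Set.ncard_eq_toFinset_card (ED H) hEDfin, mul_comm]
  -- colorings agreeing on d₁, d₂
  have hECeqfin : ({γ ∈ EC H | γ d₁ = γ d₂}).Finite := Set.toFinite _
  have hECeq3 : {γ ∈ EC H | γ d₁ = γ d₂}.ncard = 3 * N := by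
    set t3 : Finset (Color × Color) := {(colA, colA), (colB, colB), (colC, colC)} with ht3
    have hf : ∀ γ ∈ {γ ∈ EC H | γ d₁ = γ d₂}, (γ d₁, γ d₂) ∈ t3 := by
      rintro γ ⟨hγ, heq⟩
      rw [ht3]
      simp only [Finset.mem_insert, Finset.mem_singleton, Prod.mk.injEq]
      rcases mem_colorSet_iff.mp (hγ.1 d₁ hd₁) with h | h | h
      · exact Or.inl ⟨h, heq.symm.trans h⟩
      · exact Or.inr (Or.inl ⟨h, heq.symm.trans h⟩)
      · exact Or.inr (Or.inr ⟨h, heq.symm.trans h⟩)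
    rw [ncard_fiber_sum hECeqfin t3 (fun γ => (γ d₁, γ d₂)) hf]
    have hfib : ∀ x : Color, x ∈ colorSet →
        {γ ∈ {γ ∈ EC H | γ d₁ = γ d₂} | (γ d₁, γ d₂) = (x, x)}.ncard = N := by
      intro x hx
      have hseteq : {γ ∈ {γ ∈ EC H | γ d₁ = γ d₂} | (γ d₁, γ d₂) = (x, x)} =
          {γ ∈ EC H | γ d₁ = x ∧ γ d₂ = x} := by
        ext γ
        constructor
        · rintro ⟨⟨hγ, -⟩, hp⟩
          rw [Prod.mk.injEq] at hp
          exact ⟨hγ, hp⟩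
        · rintro ⟨hγ, h1, h2⟩
          exact ⟨⟨hγ, h1.trans h2.symm⟩, by rw [h1, h2]⟩
      rw [hseteq]
      exact hclassN x hx x hx
    rw [ht3, Finset.sum_insert (by decide), Finset.sum_insert (by decide),
      Finset.sum_singleton, hfib colA hcA, hfib colB hcB, hfib colC hcC]
    ring
  have hEDsamefin : ({D ∈ ED H | SameClass D d₁ d₂}).Finite := Set.toFinite _
  have hECeq6 : {γ ∈ EC H | γ d₁ = γ d₂}.ncard =
      6 * {D ∈ ED H | SameClass D d₁ d₂}.ncard := by
    have hf : ∀ γ ∈ {γ ∈ EC H | γ d₁ = γ d₂}, decompOf H γ ∈ hEDsamefin.toFinset := by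
      rintro γ ⟨hγ, heq⟩
      rw [hEDsamefin.mem_toFinset]
      exact ⟨decompOf_mem_ED hcubic hγ, (decompOf_same_iff hγ hd₁ hd₂).mpr heq⟩
    rw [ncard_fiber_sum hECeqfin hEDsamefin.toFinset (decompOf H) hf]
    have hfib : ∀ δ ∈ hEDsamefin.toFinset,
        {γ ∈ {γ ∈ EC H | γ d₁ = γ d₂} | decompOf H γ = δ}.ncard = 6 := by
      intro δ hδ
      rw [hEDsamefin.mem_toFinset] at hδ
      have hseteq : {γ ∈ {γ ∈ EC H | γ d₁ = γ d₂} | decompOf H γ = δ} =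
          {γ ∈ EC H | decompOf H γ = δ} := by
        ext γ
        constructor
        · rintro ⟨⟨hγ, -⟩, hFδ⟩
          exact ⟨hγ, hFδ⟩
        · rintro ⟨hγ, hFδ⟩
          refine ⟨⟨hγ, ?_⟩, hFδ⟩
          exact (decompOf_same_iff hγ hd₁ hd₂).mp (by rw [hFδ]; exact hδ.2)
      rw [hseteq]
      exact decompOf_fiber_card hcubic hδ.1
    rw [Finset.sum_congr rfl hfib, Finset.sum_const, smul_eq_mul,
      ← Set.ncard_eq_toFinset_card _ hEDsamefin, mul_comm]
  -- assemble
  have hECpos : 0 < (EC H).ncard := (Set.ncard_pos hECfin).mpr hcol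
  set J : ℕ := {D ∈ ED H | SameClass D d₁ d₂}.ncard with hJ
  set cED : ℕ := (ED H).ncard with hcED
  set cEC : ℕ := (EC H).ncard with hcEC
  set cEq : ℕ := {γ ∈ EC H | γ d₁ = γ d₂}.ncard with hcEq
  clear_value J cED cEC cEq N
  have harith : N = 2 * J ∧ cED = 3 * J ∧ cEC = 18 * J ∧ 0 < J := by
    clear * - hEC9 hEC6 hECeq3 hECeq6 hECpos
    omega
  refine ⟨J, harith.2.2.2, harith.2.1, harith.2.2.1, rfl, ?_⟩
  intro x hx y hy
  rw [hclassN x hx y hy, harith.1]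


end SnarkPaper
end

section
/- Let G be a snark and e an edge of G, and let d₁ and d₂ be the two new edges of the simple cubic graph G_e. If G_e admits an edge-3-coloring, then d₁ and d₂ are orthogonal edges of G_e. -/
namespace SnarkPaper

open SimpleGraph

variable {V V₁ V₂ : Type*}

section Aux
variable {G : SimpleGraph V}

lemma sym2_ne_left {a b c d : V} (h1 : a ≠ c) (h2 : a ≠ d) : s(a, b) ≠ s(c, d) := by
  intro h
  rcases Sym2.eq_iff.mp h with ⟨h', -⟩ | ⟨h', -⟩
  exacts [h1 h', h2 h']

lemma sym2_ne_right {a b c d : V} (h1 : b ≠ c) (h2 : b ≠ d) : s(a, b) ≠ s(c, d) := by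
  intro h
  rcases Sym2.eq_iff.mp h with ⟨-, h'⟩ | ⟨-, h'⟩
  exacts [h2 h', h1 h']

lemma mem_support_of_mem_edges'' {s t p : V} {Q : G.Walk s t} {e : Sym2 V}
    (he : e ∈ Q.edges) (hp : p ∈ e) : p ∈ Q.support := by
  induction e with
  | h a b =>
    rcases Sym2.mem_iff.mp hp with rfl | rfl
    · exact Q.fst_mem_support_of_mem_edges he
    · exact Q.snd_mem_support_of_mem_edges he

lemma edge_start_unique {s t : V} {Q : G.Walk s t} (hQ : Q.IsPath) {e f : Sym2 V}
    (he : e ∈ Q.edges) (hf : f ∈ Q.edges) (hse : s ∈ e) (hsf : s ∈ f) : e = f := by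
  cases Q with
  | nil => simp at he
  | @cons _ b _ h R =>
    have hs : s ∉ R.support := by
      have := hQ.support_nodup
      simp only [Walk.support_cons, List.nodup_cons] at this
      exact this.1
    have key : ∀ g : Sym2 V, g ∈ (Walk.cons h R).edges → s ∈ g → g = s(s, b) := by
      intro g hg hsg
      rw [Walk.edges_cons, List.mem_cons] at hg
      rcases hg with rfl | hg
      · rfl
      · exact absurd (mem_support_of_mem_edges'' hg hsg) hs
    rw [key e he hse, key f hf hsf]

lemma edge_end_unique {s t : V} {Q : G.Walk s t} (hQ : Q.IsPath) {e f : Sym2 V}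
    (he : e ∈ Q.edges) (hf : f ∈ Q.edges) (hse : t ∈ e) (hsf : t ∈ f) : e = f := by
  refine edge_start_unique (Q := Q.reverse) hQ.reverse ?_ ?_ hse hsf <;>
    simpa [Walk.edges_reverse]

lemma exists_edge_at_start {s t : V} (Q : G.Walk s t) (hst : s ≠ t) :
    ∃ e ∈ Q.edges, s ∈ e := by
  cases Q with
  | nil => exact absurd rfl hst
  | @cons _ b _ h R => exact ⟨s(s, b), by simp, by simp⟩

lemma exists_edge_at_end {s t : V} (Q : G.Walk s t) (hst : s ≠ t) :
    ∃ e ∈ Q.edges, t ∈ e := by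
  obtain ⟨e, he, hte⟩ := exists_edge_at_start Q.reverse hst.symm
  exact ⟨e, by simpa [Walk.edges_reverse] using he, hte⟩

/-- In a cycle, each vertex lying on some edge of the cycle lies on exactly two edges. -/
lemma cycle_two_edges_s2 {r : V} {D : G.Walk r r} (hD : D.IsCycle) {p : V} {f : Sym2 V}
    (hf : f ∈ D.edges) (hpf : p ∈ f) :
    ∃ g ∈ D.edges, p ∈ g ∧ g ≠ f ∧ ∀ h ∈ D.edges, p ∈ h → h = f ∨ h = g := by
  classical
  have hp : p ∈ D.support := mem_support_of_mem_edges'' hf hpf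
  have hD' := hD.rotate hp
  have hedges : ∀ e : Sym2 V, (e ∈ (D.rotate p hp).edges ↔ e ∈ D.edges) :=
    fun e => (D.rotate_edges p hp).mem_iff
  revert hD'
  generalize D.rotate p hp = D' at hedges
  intro hD'
  cases D' with
  | nil => exact absurd rfl hD'.ne_nil
  | @cons _ b _ h Q =>
    rw [Walk.cons_isCycle_iff] at hD'
    obtain ⟨hQpath, hhead⟩ := hD'
    have hbp : b ≠ p := h.ne'
    obtain ⟨ℓ, hℓQ, hpℓ⟩ := exists_edge_at_end Q hbp
    have huniq : ∀ g ∈ Q.edges, p ∈ g → g = ℓ := fun g hg hpg =>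
      edge_end_unique hQpath hg hℓQ hpg hpℓ
    have hmem : ∀ e : Sym2 V, e ∈ D.edges ↔ (e = s(p, b) ∨ e ∈ Q.edges) := by
      intro e; rw [← hedges e, Walk.edges_cons, List.mem_cons]
    have hℓD : ℓ ∈ D.edges := (hmem ℓ).mpr (Or.inr hℓQ)
    have hheadD : s(p, b) ∈ D.edges := (hmem _).mpr (Or.inl rfl)
    have hℓne : ℓ ≠ s(p, b) := fun hcon => hhead (hcon ▸ hℓQ)
    rcases (hmem f).mp hf with rfl | hfQ
    · refine ⟨ℓ, hℓD, hpℓ, hℓne, fun h' hh' hph' => ?_⟩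
      rcases (hmem h').mp hh' with rfl | hQ'
      · exact Or.inl rfl
      · exact Or.inr (huniq h' hQ' hph')
    · have hfℓ : f = ℓ := huniq f hfQ hpf
      subst hfℓ
      refine ⟨s(p, b), hheadD, by simp, fun hcon => hℓne hcon.symm, fun h' hh' hph' => ?_⟩
      rcases (hmem h').mp hh' with rfl | hQ'
      · exact Or.inr rfl
      · exact Or.inl (huniq h' hQ' hph')

lemma split_at_edge {s t : V} (P : G.Walk s t) {e : Sym2 V} (he : e ∈ P.edges) :
    ∃ (a b : V) (h : G.Adj a b) (P₁ : G.Walk s a) (P₂ : G.Walk b t),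
      P = P₁.append (Walk.cons h P₂) ∧ e = s(a, b) := by
  induction P with
  | nil => simp at he
  | @cons _ b _ h R ih =>
    rw [Walk.edges_cons, List.mem_cons] at he
    rcases he with rfl | he
    · exact ⟨_, b, h, Walk.nil, R, by simp, rfl⟩
    · obtain ⟨a', b', h', P₁, P₂, hPeq, heq⟩ := ih he
      exact ⟨a', b', h', Walk.cons h P₁, P₂, by rw [Walk.cons_append, hPeq], heq⟩

lemma no_triangle (h5 : 5 ≤ G.girth) {a b c : V}
    (hab : G.Adj a b) (hbc : G.Adj b c) (hca : G.Adj c a) : False := by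
  have hw : (Walk.cons hab (Walk.cons hbc (Walk.cons hca Walk.nil))).IsCycle := by
    rw [Walk.cons_isCycle_iff]
    refine ⟨?_, ?_⟩
    · rw [Walk.cons_isPath_iff]
      exact ⟨by rw [Walk.cons_isPath_iff]; exact ⟨by simp, by simp [hca.ne]⟩,
        by simp [hab.ne', hbc.ne]⟩
    · simp only [Walk.edges_cons, Walk.edges_nil, List.mem_cons, List.not_mem_nil, or_false,
        Sym2.eq_iff]
      push_neg
      exact ⟨⟨fun h => absurd h hab.ne, fun h => hca.ne' h⟩,
        ⟨fun h => absurd h hca.ne', fun _ => hbc.ne⟩⟩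
  have hle : G.egirth ≤ 3 := by
    have := le_egirth.mp (le_refl G.egirth) a _ hw
    simpa using this
  have : G.girth ≤ 3 := by
    have := ENat.toNat_le_toNat hle (by simp)
    simpa [SimpleGraph.girth] using this
  omega

lemma color_cases {c : Color} (h : c ∈ colorSet) : c = colA ∨ c = colB ∨ c = colC := h

lemma third_color {x y : Color} (hx : x ∈ colorSet) (hy : y ∈ colorSet) (hxy : x ≠ y) :
    x + y ∈ colorSet ∧ x + y ≠ x ∧ x + y ≠ y := by
  rcases color_cases hx with rfl | rfl | rfl <;> rcases color_cases hy with rfl | rfl | rfl <;>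
    first
      | exact absurd rfl hxy
      | refine ⟨?_, by decide, by decide⟩ <;> simp [colorSet, colA, colB, colC] <;> decide


lemma nbhd_eq [Finite V] (hcub : IsCubic G) {u v t₁ t₂ : V} (huv : G.Adj u v)
    (ht₁ : G.Adj u t₁) (ht₂ : G.Adj u t₂) (h12 : t₁ ≠ t₂) (h1v : t₁ ≠ v) (h2v : t₂ ≠ v) :
    G.neighborSet u = {v, t₁, t₂} := by
  refine (Set.eq_of_subset_of_ncard_le ?_ ?_ (Set.toFinite _)).symm
  · intro z hz
    rcases hz with rfl | rfl | rfl
    exacts [huv, ht₁, ht₂]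
  · rw [hcub u]
    have : ({v, t₁, t₂} : Set V).ncard = 3 :=
      Set.ncard_eq_three.mpr ⟨v, t₁, t₂, fun h => h1v h.symm, fun h => h2v h.symm, h12, rfl⟩
    omega

lemma edge_at {u v t₁ t₂ : V} (hN : G.neighborSet u = {v, t₁, t₂}) {e : Sym2 V}
    (he : e ∈ G.edgeSet) (hu : u ∈ e) : e = s(u, v) ∨ e = s(u, t₁) ∨ e = s(u, t₂) := by
  induction e with
  | h a b =>
    rw [SimpleGraph.mem_edgeSet] at he
    rcases Sym2.mem_iff.mp hu with rfl | rfl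
    · have : b ∈ G.neighborSet u := he
      rw [hN] at this
      rcases this with rfl | rfl | rfl
      exacts [Or.inl rfl, Or.inr (Or.inl rfl), Or.inr (Or.inr rfl)]
    · have : a ∈ G.neighborSet u := he.symm
      rw [hN] at this
      rcases this with rfl | rfl | rfl
      · exact Or.inl (Sym2.eq_swap)
      · exact Or.inr (Or.inl Sym2.eq_swap)
      · exact Or.inr (Or.inr Sym2.eq_swap)

lemma mem_H_iff {u v t₁ t₂ w₁ w₂ : V}
    (hNu : G.neighborSet u = {v, t₁, t₂}) (hNv : G.neighborSet v = {u, w₁, w₂})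
    (ht : t₁ ≠ t₂) (hw : w₁ ≠ w₂) (ht₁v : t₁ ≠ v) (ht₂v : t₂ ≠ v)
    (hw₁u : w₁ ≠ u) (hw₂u : w₂ ≠ u) {e : Sym2 V} :
    e ∈ (edgeDeleted G u v).edgeSet ↔
      ((e ∈ G.edgeSet ∧ u ∉ e ∧ v ∉ e) ∨ e = s(t₁, t₂) ∨ e = s(w₁, w₂)) := by
  have ht₁ : G.Adj u t₁ := by
    have : t₁ ∈ G.neighborSet u := by rw [hNu]; simp
    exact this
  have ht₂ : G.Adj u t₂ := by
    have : t₂ ∈ G.neighborSet u := by rw [hNu]; simp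
    exact this
  have hw₁ : G.Adj v w₁ := by
    have : w₁ ∈ G.neighborSet v := by rw [hNv]; simp
    exact this
  have hw₂ : G.Adj v w₂ := by
    have : w₂ ∈ G.neighborSet v := by rw [hNv]; simp
    exact this
  rw [edgeDeleted, SimpleGraph.edgeSet_fromEdgeSet, Set.mem_diff]
  constructor
  · rintro ⟨hmem, hdiag⟩
    rcases hmem with (hmem | ⟨x, y, rfl, hxy, hux, huy, hxv, hyv⟩) |
        ⟨x, y, rfl, hxy, hvx, hvy, hxu, hyu⟩
    · exact Or.inl ⟨hmem.1, hmem.2.1, hmem.2.2⟩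
    · have hx : x ∈ G.neighborSet u := hux
      have hy : y ∈ G.neighborSet u := huy
      rw [hNu] at hx hy
      refine Or.inr (Or.inl ?_)
      rcases hx with rfl | rfl | rfl
      · exact absurd rfl hxv
      · rcases hy with rfl | rfl | rfl
        exacts [absurd rfl hyv, absurd rfl hxy, rfl]
      · rcases hy with rfl | rfl | rfl
        exacts [absurd rfl hyv, Sym2.eq_swap, absurd rfl hxy]
    · have hx : x ∈ G.neighborSet v := hvx
      have hy : y ∈ G.neighborSet v := hvy
      rw [hNv] at hx hy
      refine Or.inr (Or.inr ?_)
      rcases hx with rfl | rfl | rfl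
      · exact absurd rfl hxu
      · rcases hy with rfl | rfl | rfl
        exacts [absurd rfl hyu, absurd rfl hxy, rfl]
      · rcases hy with rfl | rfl | rfl
        exacts [absurd rfl hyu, Sym2.eq_swap, absurd rfl hxy]
  · rintro (⟨he, hue, hve⟩ | rfl | rfl)
    · exact ⟨Or.inl (Or.inl ⟨he, hue, hve⟩),
        G.not_isDiag_of_mem_edgeSet he⟩
    · exact ⟨Or.inl (Or.inr ⟨t₁, t₂, rfl, ht, ht₁, ht₂, ht₁v, ht₂v⟩), by simpa using ht⟩
    · exact ⟨Or.inr ⟨w₁, w₂, rfl, hw, hw₁, hw₂, hw₁u, hw₂u⟩, by simpa using hw⟩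

lemma main_contra [Finite V]
    (hcub : IsCubic G) (hgirth : 5 ≤ G.girth) (hEC : EC G = ∅)
    {u v ta tb wa wb : V} (huv : G.Adj u v)
    (hta : G.Adj u ta) (htb : G.Adj u tb) (htatb : ta ≠ tb) (htav : ta ≠ v) (htbv : tb ≠ v)
    (hwa : G.Adj v wa) (hwb : G.Adj v wb) (hwawb : wa ≠ wb) (hwau : wa ≠ u) (hwbu : wb ≠ u)
    {γ : Sym2 V → Color} (hγ : γ ∈ EC (edgeDeleted G u v))
    {x y : Color} (hx : x ∈ colorSet) (hy : y ∈ colorSet) (hxy : x ≠ y)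
    {r : V} {D : (edgeDeleted G u v).Walk r r} (hD : D.IsCycle)
    (hcolD : ∀ e ∈ D.edges, γ e = x ∨ γ e = y)
    {A₁ : (edgeDeleted G u v).Walk tb wa} {A₂ : (edgeDeleted G u v).Walk wb ta}
    (hE : ∀ e, e ∈ D.edges ↔ (e = s(ta, tb) ∨ e = s(wa, wb) ∨ e ∈ A₁.edges ∨ e ∈ A₂.edges))
    (h1A2 : s(ta, tb) ∉ A₂.edges) (h2A2 : s(wa, wb) ∉ A₂.edges)
    (hdisj : ∀ z, z ∈ A₁.support → z ∉ A₂.support) : False := by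
  classical
  obtain ⟨hγmem, hγzero, hγprop⟩ := hγ
  -- basic distinctness facts
  have hGuv : (s(u, v) : Sym2 V) ∈ G.edgeSet := huv
  have hGuta : (s(u, ta) : Sym2 V) ∈ G.edgeSet := hta
  have hGutb : (s(u, tb) : Sym2 V) ∈ G.edgeSet := htb
  have hGvwa : (s(v, wa) : Sym2 V) ∈ G.edgeSet := hwa
  have hGvwb : (s(v, wb) : Sym2 V) ∈ G.edgeSet := hwb
  have htawa : ta ≠ wa := fun h => no_triangle hgirth huv (h ▸ hwa) hta.symm
  have htawb : ta ≠ wb := fun h => no_triangle hgirth huv (h ▸ hwb) hta.symm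
  have htbwa : tb ≠ wa := fun h => no_triangle hgirth huv (h ▸ hwa) htb.symm
  have htbwb : tb ≠ wb := fun h => no_triangle hgirth huv (h ▸ hwb) htb.symm
  have hd₁G : (s(ta, tb) : Sym2 V) ∉ G.edgeSet := fun h =>
    no_triangle hgirth h htb.symm hta
  have hd₂G : (s(wa, wb) : Sym2 V) ∉ G.edgeSet := fun h =>
    no_triangle hgirth h hwb.symm hwa
  have hNu : G.neighborSet u = {v, ta, tb} := nbhd_eq hcub huv hta htb htatb htav htbv
  have hNv : G.neighborSet v = {u, wa, wb} := nbhd_eq hcub huv.symm hwa hwb hwawb hwau hwbu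
  have hH : ∀ e : Sym2 V, e ∈ (edgeDeleted G u v).edgeSet ↔
      ((e ∈ G.edgeSet ∧ u ∉ e ∧ v ∉ e) ∨ e = s(ta, tb) ∨ e = s(wa, wb)) := fun e =>
    mem_H_iff hNu hNv htatb hwawb htav htbv hwau hwbu
  have hHuv : ∀ e ∈ (edgeDeleted G u v).edgeSet, u ∉ e ∧ v ∉ e := by
    intro e he
    rcases (hH e).mp he with ⟨-, h1, h2⟩ | rfl | rfl
    · exact ⟨h1, h2⟩
    · constructor
      · intro h
        rcases Sym2.mem_iff.mp h with rfl | rfl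
        exacts [hta.ne rfl, htb.ne rfl]
      · intro h
        rcases Sym2.mem_iff.mp h with rfl | rfl
        exacts [htav rfl, htbv rfl]
    · constructor
      · intro h
        rcases Sym2.mem_iff.mp h with rfl | rfl
        exacts [hwau rfl, hwbu rfl]
      · intro h
        rcases Sym2.mem_iff.mp h with rfl | rfl
        exacts [hwa.ne rfl, hwb.ne rfl]
  have hDH : ∀ e ∈ D.edges, e ∈ (edgeDeleted G u v).edgeSet := fun e he =>
    D.edges_subset_edgeSet he
  have hA₂H : ∀ e ∈ A₂.edges, e ∈ (edgeDeleted G u v).edgeSet := fun e he =>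
    A₂.edges_subset_edgeSet he
  have hd₁D : (s(ta, tb) : Sym2 V) ∈ D.edges := (hE _).mpr (Or.inl rfl)
  have hd₂D : (s(wa, wb) : Sym2 V) ∈ D.edges := (hE _).mpr (Or.inr (Or.inl rfl))
  have hγd₁ : γ s(ta, tb) = x ∨ γ s(ta, tb) = y := hcolD _ hd₁D
  have hγd₂ : γ s(wa, wb) = x ∨ γ s(wa, wb) = y := hcolD _ hd₂D
  -- the swap function
  set sw : Color → Color := fun c => if c = x then y else if c = y then x else c with hsw
  have sw_x : sw x = y := by simp [hsw]
  have sw_y : sw y = x := by simp [hsw, hxy.symm]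
  have sw_fix : ∀ c, c ≠ x → c ≠ y → sw c = c := by
    intro c h1 h2; simp [hsw, h1, h2]
  have sw_sw : ∀ c, sw (sw c) = c := by
    intro c
    by_cases h1 : c = x
    · simp [h1, sw_x, sw_y]
    by_cases h2 : c = y
    · simp [h2, sw_x, sw_y]
    rw [sw_fix c h1 h2, sw_fix c h1 h2]
  have sw_inj : ∀ c d, sw c = sw d → c = d := by
    intro c d h
    have := congrArg sw h
    rwa [sw_sw, sw_sw] at this
  have sw_mem : ∀ c ∈ colorSet, sw c ∈ colorSet := by
    intro c hc
    by_cases h1 : c = x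
    · rw [h1, sw_x]; exact hy
    by_cases h2 : c = y
    · rw [h2, sw_y]; exact hx
    rwa [sw_fix c h1 h2]
  have sw_ne : ∀ c, c = x ∨ c = y → sw c ≠ c := by
    rintro c (rfl | rfl)
    · rw [sw_x]; exact hxy.symm
    · rw [sw_y]; exact hxy
  have sw_xy : ∀ c, c = x ∨ c = y → sw c = x ∨ sw c = y := by
    rintro c (rfl | rfl)
    · rw [sw_x]; exact Or.inr rfl
    · rw [sw_y]; exact Or.inl rfl
  obtain ⟨hz_mem, hzx, hzy⟩ := third_color hx hy hxy
  have hz_ne : ∀ c, c = x ∨ c = y → x + y ≠ c := by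
    rintro c (rfl | rfl)
    exacts [hzx, hzy]
  -- the Kempe-chain structure at a vertex of the cycle
  have KL : ∀ (p : V) (f : Sym2 V), f ∈ D.edges → p ∈ f →
      ∃ g ∈ D.edges, p ∈ g ∧ g ≠ f ∧ γ g ≠ γ f ∧
        ∀ h ∈ (edgeDeleted G u v).edgeSet, p ∈ h → h ≠ f → (γ h = x ∨ γ h = y) → h = g := by
    intro p f hf hpf
    obtain ⟨g, hgD, hpg, hgf, huniq⟩ := cycle_two_edges_s2 hD hf hpf
    have hgγ : γ g ≠ γ f := hγprop g (hDH g hgD) f (hDH f hf) ⟨hgf, p, hpg, hpf⟩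
    refine ⟨g, hgD, hpg, hgf, hgγ, ?_⟩
    intro h hhH hph hhf hhxy
    by_contra hhg
    have h1 : γ h ≠ γ f := hγprop h hhH f (hDH f hf) ⟨hhf, p, hph, hpf⟩
    have h2 : γ h ≠ γ g := hγprop h hhH g (hDH g hgD) ⟨hhg, p, hph, hpg⟩
    rcases hcolD f hf with hf' | hf' <;> rcases hcolD g hgD with hg' | hg' <;>
      rcases hhxy with hh' | hh' <;> rw [hf'] at h1 <;> rw [hg'] at h2 <;> rw [hh'] at h1 h2 <;>
        first
          | exact h1 rfl
          | exact h2 rfl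
          | exact hgγ (hg'.trans hf'.symm)
  -- the new coloring of G
  set δ : Sym2 V → Color := fun e =>
    if e = s(u, v) then x + y
    else if e = s(u, ta) then sw (γ s(ta, tb))
    else if e = s(u, tb) then γ s(ta, tb)
    else if e = s(v, wa) then γ s(wa, wb)
    else if e = s(v, wb) then sw (γ s(wa, wb))
    else if e ∈ A₂.edges then sw (γ e)
    else if e = s(ta, tb) ∨ e = s(wa, wb) then 0
    else γ e with hδ
  have hδuv : δ s(u, v) = x + y := by simp [hδ]
  have hδuta : δ s(u, ta) = sw (γ s(ta, tb)) := by
    have h1 : s(u, ta) ≠ s(u, v) := sym2_ne_right hta.ne' htav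
    simp [hδ, h1]
  have hδutb : δ s(u, tb) = γ s(ta, tb) := by
    have h1 : s(u, tb) ≠ s(u, v) := sym2_ne_right htb.ne' htbv
    have h2 : s(u, tb) ≠ s(u, ta) := sym2_ne_right htb.ne' (fun h => htatb h.symm)
    simp [hδ, h1, h2]
  have hδvwa : δ s(v, wa) = γ s(wa, wb) := by
    have h1 : s(v, wa) ≠ s(u, v) := sym2_ne_right hwau hwa.ne'
    have h2 : s(v, wa) ≠ s(u, ta) := sym2_ne_left huv.ne' (fun h => htav h.symm)
    have h3 : s(v, wa) ≠ s(u, tb) := sym2_ne_left huv.ne' (fun h => htbv h.symm)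
    simp [hδ, h1, h2, h3]
  have hδvwb : δ s(v, wb) = sw (γ s(wa, wb)) := by
    have h1 : s(v, wb) ≠ s(u, v) := sym2_ne_right hwbu hwb.ne'
    have h2 : s(v, wb) ≠ s(u, ta) := sym2_ne_left huv.ne' (fun h => htav h.symm)
    have h3 : s(v, wb) ≠ s(u, tb) := sym2_ne_left huv.ne' (fun h => htbv h.symm)
    have h4 : s(v, wb) ≠ s(v, wa) := sym2_ne_right hwb.ne' (fun h => hwawb h.symm)
    simp [hδ, h1, h2, h3, h4]
  have not_spec : ∀ e : Sym2 V, u ∉ e → v ∉ e →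
      e ≠ s(u, v) ∧ e ≠ s(u, ta) ∧ e ≠ s(u, tb) ∧ e ≠ s(v, wa) ∧ e ≠ s(v, wb) := by
    intro e hue hve
    refine ⟨?_, ?_, ?_, ?_, ?_⟩ <;> intro h <;> rw [h] at hue hve
    · exact hue (by simp)
    · exact hue (by simp)
    · exact hue (by simp)
    · exact hve (by simp)
    · exact hve (by simp)
  have hδA₂ : ∀ e ∈ A₂.edges, δ e = sw (γ e) := by
    intro e he
    obtain ⟨hue, hve⟩ := hHuv e (hA₂H e he)
    obtain ⟨h1, h2, h3, h4, h5⟩ := not_spec e hue hve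
    simp [hδ, h1, h2, h3, h4, h5, he]
  have hδold : ∀ e : Sym2 V, u ∉ e → v ∉ e → e ∉ A₂.edges → e ≠ s(ta, tb) → e ≠ s(wa, wb) →
      δ e = γ e := by
    intro e hue hve he2 hed₁ hed₂
    obtain ⟨h1, h2, h3, h4, h5⟩ := not_spec e hue hve
    simp [hδ, h1, h2, h3, h4, h5, he2, hed₁, hed₂]
  -- which edges at the four endpoints lie on the swapped arc
  have hOther_ta : ∀ g ∈ D.edges, ta ∈ g → g ≠ s(ta, tb) → g ∈ A₂.edges := by
    intro g hg htag hgne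
    rcases (hE g).mp hg with rfl | rfl | hg1 | hg2
    · exact absurd rfl hgne
    · rcases Sym2.mem_iff.mp htag with h | h
      exacts [absurd h htawa, absurd h htawb]
    · exact absurd A₂.end_mem_support (hdisj ta (mem_support_of_mem_edges'' hg1 htag))
    · exact hg2
  have hOther_wb : ∀ g ∈ D.edges, wb ∈ g → g ≠ s(wa, wb) → g ∈ A₂.edges := by
    intro g hg hwbg hgne
    rcases (hE g).mp hg with rfl | rfl | hg1 | hg2
    · rcases Sym2.mem_iff.mp hwbg with h | h
      exacts [absurd h.symm htawb, absurd h.symm htbwb]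
    · exact absurd rfl hgne
    · exact absurd A₂.start_mem_support (hdisj wb (mem_support_of_mem_edges'' hg1 hwbg))
    · exact hg2
  have hKeep_tb : ∀ g : Sym2 V, tb ∈ g → g ∉ A₂.edges := fun g htbg hg2 =>
    hdisj tb A₁.start_mem_support (mem_support_of_mem_edges'' hg2 htbg)
  have hKeep_wa : ∀ g : Sym2 V, wa ∈ g → g ∉ A₂.edges := fun g hwag hg2 =>
    hdisj wa A₁.end_mem_support (mem_support_of_mem_edges'' hg2 hwag)
  -- endpoint lemmas
  have endSwap : ∀ (q : V) (dd : Sym2 V), dd ∈ D.edges → q ∈ dd → dd ∉ G.edgeSet →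
      (∀ g ∈ D.edges, q ∈ g → g ≠ dd → g ∈ A₂.edges) →
      ∀ f ∈ G.edgeSet, u ∉ f → v ∉ f → q ∈ f → δ f ≠ sw (γ dd) := by
    intro q dd hddD hqdd hddG hOther f hfG huf hvf hqf
    have hfne : f ≠ dd := fun h => hddG (h ▸ hfG)
    have hfH : f ∈ (edgeDeleted G u v).edgeSet := (hH f).mpr (Or.inl ⟨hfG, huf, hvf⟩)
    have hfd₁ : f ≠ s(ta, tb) := fun h => hd₁G (h ▸ hfG)
    have hfd₂ : f ≠ s(wa, wb) := fun h => hd₂G (h ▸ hfG)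
    by_cases hfxy : γ f = x ∨ γ f = y
    · obtain ⟨g, hgD, hqg, hgdd, hγg, huniq⟩ := KL q dd hddD hqdd
      have hfg : f = g := huniq f hfH hqf hfne hfxy
      have hfA2 : f ∈ A₂.edges := hfg ▸ hOther g hgD hqg hgdd
      rw [hδA₂ f hfA2]
      intro hcon
      exact (hfg ▸ hγg : γ f ≠ γ dd) (sw_inj _ _ hcon)
    · push_neg at hfxy
      have heval : δ f = γ f := by
        by_cases hf2 : f ∈ A₂.edges
        · rw [hδA₂ f hf2, sw_fix _ hfxy.1 hfxy.2]
        · exact hδold f huf hvf hf2 hfd₁ hfd₂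
      rw [heval]
      intro hcon
      rcases sw_xy _ (hcolD dd hddD) with h | h
      · exact hfxy.1 (hcon.trans h)
      · exact hfxy.2 (hcon.trans h)
  have endKeep : ∀ (q : V) (dd : Sym2 V), dd ∈ D.edges → q ∈ dd → dd ∉ G.edgeSet →
      (∀ g : Sym2 V, q ∈ g → g ∉ A₂.edges) →
      ∀ f ∈ G.edgeSet, u ∉ f → v ∉ f → q ∈ f → δ f ≠ γ dd := by
    intro q dd hddD hqdd hddG hKeep f hfG huf hvf hqf
    have hfne : f ≠ dd := fun h => hddG (h ▸ hfG)
    have hfH : f ∈ (edgeDeleted G u v).edgeSet := (hH f).mpr (Or.inl ⟨hfG, huf, hvf⟩)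
    have hfd₁ : f ≠ s(ta, tb) := fun h => hd₁G (h ▸ hfG)
    have hfd₂ : f ≠ s(wa, wb) := fun h => hd₂G (h ▸ hfG)
    have heval : δ f = γ f := by
      by_cases hf2 : f ∈ A₂.edges
      · exact absurd hf2 (hKeep f hqf)
      · exact hδold f huf hvf hf2 hfd₁ hfd₂
    rw [heval]
    by_cases hfxy : γ f = x ∨ γ f = y
    · obtain ⟨g, hgD, hqg, hgdd, hγg, huniq⟩ := KL q dd hddD hqdd
      have hfg : f = g := huniq f hfH hqf hfne hfxy
      exact (hfg ▸ hγg : γ f ≠ γ dd)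
    · push_neg at hfxy
      intro hcon
      rcases hcolD dd hddD with h | h
      · exact hfxy.1 (hcon.trans h)
      · exact hfxy.2 (hcon.trans h)
  -- classification of edges at u or v
  have hspec_class : ∀ g ∈ G.edgeSet, u ∈ g ∨ v ∈ g →
      g = s(u, v) ∨ g = s(u, ta) ∨ g = s(u, tb) ∨ g = s(v, wa) ∨ g = s(v, wb) := by
    intro g hg hor
    rcases hor with h | h
    · rcases edge_at hNu hg h with h' | h' | h'
      exacts [Or.inl h', Or.inr (Or.inl h'), Or.inr (Or.inr (Or.inl h'))]
    · rcases edge_at hNv hg h with h' | h' | h'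
      · exact Or.inl (h'.trans Sym2.eq_swap)
      exacts [Or.inr (Or.inr (Or.inr (Or.inl h'))), Or.inr (Or.inr (Or.inr (Or.inr h')))]
  have no_share_tw : ∀ (t' w' p : V), G.Adj u t' → t' ≠ v → (w' = wa ∨ w' = wb) →
      p ∈ s(u, t') → p ∈ s(v, w') → False := by
    intro t' w' p hadj ht'v hw' hp1 hp2
    rcases Sym2.mem_iff.mp hp1 with h1 | h1 <;> rcases Sym2.mem_iff.mp hp2 with h2 | h2
    · exact huv.ne (h1.symm.trans h2)
    · rcases hw' with rfl | rfl
      exacts [hwau (h1.symm.trans h2).symm, hwbu (h1.symm.trans h2).symm]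
    · exact ht'v (h1.symm.trans h2)
    · have h3 : t' = w' := h1.symm.trans h2
      subst h3
      rcases hw' with rfl | rfl
      exacts [no_triangle hgirth huv hwa hadj.symm, no_triangle hgirth huv hwb hadj.symm]
  -- spec vs old edges
  have specOld : ∀ e ∈ G.edgeSet, (u ∈ e ∨ v ∈ e) → ∀ f ∈ G.edgeSet, u ∉ f → v ∉ f →
      ∀ p, p ∈ e → p ∈ f → δ e ≠ δ f := by
    intro e he hor f hf huf hvf p hpe hpf
    rcases hspec_class e he hor with rfl | rfl | rfl | rfl | rfl
    · rcases Sym2.mem_iff.mp hpe with hp1 | hp1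
      exacts [absurd (hp1 ▸ hpf) huf, absurd (hp1 ▸ hpf) hvf]
    · rcases Sym2.mem_iff.mp hpe with hp1 | hp1
      · exact absurd (hp1 ▸ hpf) huf
      · rw [hδuta]
        exact (endSwap ta s(ta, tb) hd₁D (by simp) hd₁G hOther_ta f hf huf hvf (hp1 ▸ hpf)).symm
    · rcases Sym2.mem_iff.mp hpe with hp1 | hp1
      · exact absurd (hp1 ▸ hpf) huf
      · rw [hδutb]
        exact (endKeep tb s(ta, tb) hd₁D (by simp) hd₁G hKeep_tb f hf huf hvf (hp1 ▸ hpf)).symm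
    · rcases Sym2.mem_iff.mp hpe with hp1 | hp1
      · exact absurd (hp1 ▸ hpf) hvf
      · rw [hδvwa]
        exact (endKeep wa s(wa, wb) hd₂D (by simp) hd₂G hKeep_wa f hf huf hvf (hp1 ▸ hpf)).symm
    · rcases Sym2.mem_iff.mp hpe with hp1 | hp1
      · exact absurd (hp1 ▸ hpf) hvf
      · rw [hδvwb]
        exact (endSwap wb s(wa, wb) hd₂D (by simp) hd₂G hOther_wb f hf huf hvf (hp1 ▸ hpf)).symm
  -- mixed old edges
  have mixedOld : ∀ e ∈ G.edgeSet, u ∉ e → v ∉ e → e ∈ A₂.edges →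
      ∀ f ∈ G.edgeSet, u ∉ f → v ∉ f → f ∉ A₂.edges → f ≠ e → ∀ p, p ∈ e → p ∈ f →
        δ e ≠ δ f := by
    intro e he hue hve he2 f hf huf hvf hf2 hfe p hpe hpf
    have heH := (hH e).mpr (Or.inl ⟨he, hue, hve⟩)
    have hfH := (hH f).mpr (Or.inl ⟨hf, huf, hvf⟩)
    have hγef : γ f ≠ γ e := hγprop f hfH e heH ⟨hfe, p, hpf, hpe⟩
    have hfd₁ : f ≠ s(ta, tb) := fun h => hd₁G (h ▸ hf)
    have hfd₂ : f ≠ s(wa, wb) := fun h => hd₂G (h ▸ hf)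
    rw [hδA₂ e he2, hδold f huf hvf hf2 hfd₁ hfd₂]
    intro hcon
    by_cases hexy : γ e = x ∨ γ e = y
    · have heD : e ∈ D.edges := (hE e).mpr (Or.inr (Or.inr (Or.inr he2)))
      obtain ⟨g, hgD, hpg, hge, hγg, huniq⟩ := KL p e heD hpe
      have hfxy : γ f = x ∨ γ f = y := by
        rcases sw_xy _ hexy with h | h
        exacts [Or.inl (hcon.symm.trans h), Or.inr (hcon.symm.trans h)]
      have hfg : f = g := huniq f hfH hpf hfe hfxy
      have hfA1 : f ∈ A₁.edges := by
        rcases (hE f).mp (hfg ▸ hgD) with h | h | h | h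
        exacts [absurd h hfd₁, absurd h hfd₂, h, absurd h hf2]
      exact hdisj p (mem_support_of_mem_edges'' hfA1 hpf) (mem_support_of_mem_edges'' he2 hpe)
    · push_neg at hexy
      rw [sw_fix _ hexy.1 hexy.2] at hcon
      exact hγef hcon.symm
  -- value distinctness among the five special edges
  have hγd₁c : γ s(ta, tb) ∈ colorSet := by rcases hγd₁ with h | h <;> rw [h] <;> assumption
  have hγd₂c : γ s(wa, wb) ∈ colorSet := by rcases hγd₂ with h | h <;> rw [h] <;> assumption
  have n1 : x + y ≠ sw (γ s(ta, tb)) := hz_ne _ (sw_xy _ hγd₁)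
  have n2 : x + y ≠ γ s(ta, tb) := hz_ne _ hγd₁
  have n3 : x + y ≠ γ s(wa, wb) := hz_ne _ hγd₂
  have n4 : x + y ≠ sw (γ s(wa, wb)) := hz_ne _ (sw_xy _ hγd₂)
  have n5 : sw (γ s(ta, tb)) ≠ γ s(ta, tb) := sw_ne _ hγd₁
  have n6 : sw (γ s(wa, wb)) ≠ γ s(wa, wb) := sw_ne _ hγd₂
  -- the new coloring is a proper edge-3-coloring of G
  have hδEC : δ ∈ EC G := by
    refine ⟨?_, ?_, ?_⟩
    · intro e he
      by_cases hcase : u ∈ e ∨ v ∈ e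
      · rcases hspec_class e he hcase with rfl | rfl | rfl | rfl | rfl
        · rw [hδuv]; exact hz_mem
        · rw [hδuta]; exact sw_mem _ hγd₁c
        · rw [hδutb]; exact hγd₁c
        · rw [hδvwa]; exact hγd₂c
        · rw [hδvwb]; exact sw_mem _ hγd₂c
      · push_neg at hcase
        have heH := (hH e).mpr (Or.inl ⟨he, hcase.1, hcase.2⟩)
        by_cases he2 : e ∈ A₂.edges
        · rw [hδA₂ e he2]; exact sw_mem _ (hγmem e heH)
        · rw [hδold e hcase.1 hcase.2 he2 (fun h => hd₁G (h ▸ he)) (fun h => hd₂G (h ▸ he))]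
          exact hγmem e heH
    · intro e he
      have h1 : e ≠ s(u, v) := fun h => he (h ▸ hGuv)
      have h2 : e ≠ s(u, ta) := fun h => he (h ▸ hGuta)
      have h3 : e ≠ s(u, tb) := fun h => he (h ▸ hGutb)
      have h4 : e ≠ s(v, wa) := fun h => he (h ▸ hGvwa)
      have h5 : e ≠ s(v, wb) := fun h => he (h ▸ hGvwb)
      have he2 : e ∉ A₂.edges := by
        intro hcon
        rcases (hH e).mp (hA₂H e hcon) with ⟨h, -⟩ | h | h
        · exact he h
        · exact h1A2 (h ▸ hcon)
        · exact h2A2 (h ▸ hcon)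
      by_cases hdd : e = s(ta, tb) ∨ e = s(wa, wb)
      · simp [hδ, h1, h2, h3, h4, h5, he2, hdd]
      · have heH : e ∉ (edgeDeleted G u v).edgeSet := by
          intro hcon
          rcases (hH e).mp hcon with ⟨h, -⟩ | h | h
          exacts [he h, hdd (Or.inl h), hdd (Or.inr h)]
        simp [hδ, h1, h2, h3, h4, h5, he2, hdd, hγzero e heH]
    · rintro e he f hf ⟨hef, p, hpe, hpf⟩
      by_cases hue : u ∈ e ∨ v ∈ e
      · by_cases huf : u ∈ f ∨ v ∈ f
        · rcases hspec_class e he hue with rfl | rfl | rfl | rfl | rfl <;>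
            rcases hspec_class f hf huf with rfl | rfl | rfl | rfl | rfl
          · exact absurd rfl hef
          · rw [hδuv, hδuta]; exact n1
          · rw [hδuv, hδutb]; exact n2
          · rw [hδuv, hδvwa]; exact n3
          · rw [hδuv, hδvwb]; exact n4
          · rw [hδuta, hδuv]; exact n1.symm
          · exact absurd rfl hef
          · rw [hδuta, hδutb]; exact n5
          · exact (no_share_tw ta wa p hta htav (Or.inl rfl) hpe hpf).elim
          · exact (no_share_tw ta wb p hta htav (Or.inr rfl) hpe hpf).elim
          · rw [hδutb, hδuv]; exact n2.symm
          · rw [hδutb, hδuta]; exact n5.symm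
          · exact absurd rfl hef
          · exact (no_share_tw tb wa p htb htbv (Or.inl rfl) hpe hpf).elim
          · exact (no_share_tw tb wb p htb htbv (Or.inr rfl) hpe hpf).elim
          · rw [hδvwa, hδuv]; exact n3.symm
          · exact (no_share_tw ta wa p hta htav (Or.inl rfl) hpf hpe).elim
          · exact (no_share_tw tb wa p htb htbv (Or.inl rfl) hpf hpe).elim
          · exact absurd rfl hef
          · rw [hδvwa, hδvwb]; exact n6.symm
          · rw [hδvwb, hδuv]; exact n4.symm
          · exact (no_share_tw ta wb p hta htav (Or.inr rfl) hpf hpe).elim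
          · exact (no_share_tw tb wb p htb htbv (Or.inr rfl) hpf hpe).elim
          · rw [hδvwb, hδvwa]; exact n6
          · exact absurd rfl hef
        · push_neg at huf
          exact specOld e he hue f hf huf.1 huf.2 p hpe hpf
      · push_neg at hue
        by_cases huf : u ∈ f ∨ v ∈ f
        · exact (specOld f hf huf e he hue.1 hue.2 p hpf hpe).symm
        · push_neg at huf
          by_cases he2 : e ∈ A₂.edges
          · by_cases hf2 : f ∈ A₂.edges
            · rw [hδA₂ e he2, hδA₂ f hf2]
              intro hcon
              have heH := (hH e).mpr (Or.inl ⟨he, hue.1, hue.2⟩)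
              have hfH := (hH f).mpr (Or.inl ⟨hf, huf.1, huf.2⟩)
              exact hγprop e heH f hfH ⟨hef, p, hpe, hpf⟩ (sw_inj _ _ hcon)
            · exact mixedOld e he hue.1 hue.2 he2 f hf huf.1 huf.2 hf2 (Ne.symm hef) p hpe hpf
          · by_cases hf2 : f ∈ A₂.edges
            · exact (mixedOld f hf huf.1 huf.2 hf2 e he hue.1 hue.2 he2 hef p hpf hpe).symm
            · rw [hδold e hue.1 hue.2 he2 (fun h => hd₁G (h ▸ he)) (fun h => hd₂G (h ▸ he)),
                hδold f huf.1 huf.2 hf2 (fun h => hd₁G (h ▸ hf)) (fun h => hd₂G (h ▸ hf))]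
              have heH := (hH e).mpr (Or.inl ⟨he, hue.1, hue.2⟩)
              have hfH := (hH f).mpr (Or.inl ⟨hf, huf.1, huf.2⟩)
              exact hγprop e heH f hfH ⟨hef, p, hpe, hpf⟩
  rw [hEC] at hδEC
  exact hδEC


end Aux

set_option maxHeartbeats 2000000 in
/-- **Kászonyi, Theorem 3.3(B).** If `G` is a snark, `e = s(u,v)` is an edge of `G`, and the
graph `G_e` is edge-3-colorable, then the two new edges `d₁ = s(t₁,t₂)` and `d₂ = s(w₁,w₂)`
are orthogonal in `G_e`. -/
theorem statement_2 {V : Type*} [Fintype V] (G : SimpleGraph V) (hG : IsSnark G)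
    (u v t₁ t₂ w₁ w₂ : V) (huv : G.Adj u v)
    (ht₁ : G.Adj u t₁) (ht₂ : G.Adj u t₂) (ht : t₁ ≠ t₂) (ht₁v : t₁ ≠ v) (ht₂v : t₂ ≠ v)
    (hw₁ : G.Adj v w₁) (hw₂ : G.Adj v w₂) (hw : w₁ ≠ w₂) (hw₁u : w₁ ≠ u) (hw₂u : w₂ ≠ u)
    (hcol : (EC (edgeDeleted G u v)).Nonempty) :
    OrthogonalEdges (edgeDeleted G u v) (s(t₁, t₂)) (s(w₁, w₂)) := by
  classical
  obtain ⟨hconn, hcub, hgirth, hcyc, hEC⟩ := hG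
  -- distinctness facts coming from girth ≥ 5
  have ht₁w₁ : t₁ ≠ w₁ := fun h => no_triangle hgirth huv hw₁ (h ▸ ht₁.symm)
  have ht₁w₂ : t₁ ≠ w₂ := fun h => no_triangle hgirth huv hw₂ (h ▸ ht₁.symm)
  have ht₂w₁ : t₂ ≠ w₁ := fun h => no_triangle hgirth huv hw₁ (h ▸ ht₂.symm)
  have ht₂w₂ : t₂ ≠ w₂ := fun h => no_triangle hgirth huv hw₂ (h ▸ ht₂.symm)
  have hNu : G.neighborSet u = {v, t₁, t₂} := nbhd_eq hcub huv ht₁ ht₂ ht ht₁v ht₂v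
  have hNv : G.neighborSet v = {u, w₁, w₂} := nbhd_eq hcub huv.symm hw₁ hw₂ hw hw₁u hw₂u
  have hH : ∀ e : Sym2 V, e ∈ (edgeDeleted G u v).edgeSet ↔
      ((e ∈ G.edgeSet ∧ u ∉ e ∧ v ∉ e) ∨ e = s(t₁, t₂) ∨ e = s(w₁, w₂)) := fun e =>
    mem_H_iff hNu hNv ht hw ht₁v ht₂v hw₁u hw₂u
  refine ⟨(hH _).mpr (Or.inr (Or.inl rfl)), (hH _).mpr (Or.inr (Or.inr rfl)), ?_⟩
  rintro γ hγ ⟨x, hx, y, hy, hxy, a, C, hC, hcolC, hd₁C, hd₂C⟩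
  -- rotate the Kempe cycle to start at t₁
  have ht₁C : t₁ ∈ C.support := mem_support_of_mem_edges'' hd₁C (by simp)
  have hedges : ∀ e : Sym2 V, e ∈ (C.rotate t₁ ht₁C).edges ↔ e ∈ C.edges := fun e =>
    (C.rotate_edges t₁ ht₁C).mem_iff
  have hcyc0 : (C.rotate t₁ ht₁C).IsCycle := hC.rotate ht₁C
  revert hcyc0
  generalize C.rotate t₁ ht₁C = D0 at hedges
  intro hcyc0
  have hd₁D0 : s(t₁, t₂) ∈ D0.edges := (hedges _).mpr hd₁C
  have hd₂D0 : s(w₁, w₂) ∈ D0.edges := (hedges _).mpr hd₂C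
  have hcolD0 : ∀ e ∈ D0.edges, γ e = x ∨ γ e = y := fun e he => hcolC e ((hedges e).mp he)
  clear hd₁C hd₂C hcolC ht₁C
  cases D0 with
  | nil => exact absurd rfl hcyc0.ne_nil
  | @cons _ b _ hadj Q =>
    obtain ⟨hQpath, hhead⟩ := (Walk.cons_isCycle_iff Q hadj).mp hcyc0
    have hQtrail : Q.edges.Nodup := hQpath.isTrail.edges_nodup
    -- d₂ is an edge of Q
    have hd₂Q : s(w₁, w₂) ∈ Q.edges := by
      rcases List.mem_cons.mp ((Walk.edges_cons hadj Q) ▸ hd₂D0) with h | h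
      · exact absurd h.symm (sym2_ne_left ht₁w₁ ht₁w₂)
      · exact h
    -- split Q at d₂
    obtain ⟨wa, wb, hadj₂, Q₁, Q₂, hQeq, hd₂eq⟩ := split_at_edge Q hd₂Q
    obtain ⟨hvwa, hvwb, hwawb, hwau', hwbu', htws⟩ : G.Adj v wa ∧ G.Adj v wb ∧ wa ≠ wb ∧
        wa ≠ u ∧ wb ≠ u ∧ (t₁ ≠ wa ∧ t₁ ≠ wb ∧ t₂ ≠ wa ∧ t₂ ≠ wb) := by
      rcases Sym2.eq_iff.mp hd₂eq with ⟨h1, h2⟩ | ⟨h1, h2⟩ <;> subst h1 <;> subst h2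
      · exact ⟨hw₁, hw₂, hw, hw₁u, hw₂u, ht₁w₁, ht₁w₂, ht₂w₁, ht₂w₂⟩
      · exact ⟨hw₂, hw₁, hw.symm, hw₂u, hw₁u, ht₁w₂, ht₁w₁, ht₂w₂, ht₂w₁⟩
    obtain ⟨ht₁wa, ht₁wb, ht₂wa, ht₂wb⟩ := htws
    rw [hd₂eq] at hd₂D0
    have hQedges : Q.edges = Q₁.edges ++ s(wa, wb) :: Q₂.edges := by
      rw [hQeq, Walk.edges_append, Walk.edges_cons]
    have hQsup : Q.support = Q₁.support ++ Q₂.support := by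
      rw [hQeq, Walk.support_append, Walk.support_cons, List.tail_cons]
    have hQsupnodup : (Q₁.support ++ Q₂.support).Nodup := hQsup ▸ hQpath.support_nodup
    have hQdisj : ∀ z, z ∈ Q₁.support → z ∉ Q₂.support :=
      fun z h1 h2 => (List.disjoint_of_nodup_append hQsupnodup) h1 h2
    have hd₂Q₂ : s(wa, wb) ∉ Q₂.edges := by
      have := hQedges ▸ hQtrail
      exact (List.nodup_cons.mp (List.nodup_append.mp this).2.1).1
    -- case on where d₁ sits
    rcases List.mem_cons.mp ((Walk.edges_cons hadj Q) ▸ hd₁D0) with hcase | hcase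
    · -- d₁ is the initial edge of the rotated cycle
      have hb : t₂ = b := by
        rcases Sym2.eq_iff.mp hcase with ⟨-, h2⟩ | ⟨h1, h2⟩
        · exact h2
        · exact absurd h2.symm ht
      subst hb
      have hE : ∀ e : Sym2 V, e ∈ (Walk.cons hadj Q).edges ↔
          (e = s(t₁, t₂) ∨ e = s(wa, wb) ∨ e ∈ Q₁.edges ∨ e ∈ Q₂.edges) := by
        intro e
        rw [Walk.edges_cons, hQedges]
        simp only [List.mem_cons, List.mem_append, List.mem_cons]
        tauto
      have h1A2 : s(t₁, t₂) ∉ Q₂.edges := fun h =>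
        hhead (hQedges ▸ List.mem_append.mpr (Or.inr (List.mem_cons.mpr (Or.inr h))))
      exact main_contra hcub hgirth hEC huv ht₁ ht₂ ht ht₁v ht₂v hvwa hvwb hwawb hwau' hwbu'
        hγ hx hy hxy hcyc0 hcolD0 hE h1A2 hd₂Q₂ hQdisj
    · -- d₁ lies inside Q, necessarily inside Q₂
      have hd₁Q₂ : s(t₁, t₂) ∈ Q₂.edges := by
        rw [hQedges] at hcase
        rcases List.mem_append.mp hcase with h | h
        · exact absurd Q₂.end_mem_support
            (hQdisj t₁ (mem_support_of_mem_edges'' h (by simp)))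
        · rcases List.mem_cons.mp h with h' | h'
          · exact absurd h' (sym2_ne_left ht₁wa ht₁wb)
          · exact h'
      have hQ₂path : Q₂.IsPath := by
        have h1 : (Walk.cons hadj₂ Q₂).IsPath := Walk.IsPath.of_append_right (hQeq ▸ hQpath)
        exact ((Walk.cons_isPath_iff hadj₂ Q₂).mp h1).1
      obtain ⟨α, β, hadj₃, R₁, R₂, hQ₂eq, hd₁eq⟩ := split_at_edge Q₂ hd₁Q₂
      rcases Sym2.eq_iff.mp hd₁eq with ⟨h1, h2⟩ | ⟨h1, h2⟩
      · -- α = t₁ : impossible, t₁ would appear twice on Q₂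
        subst h1; subst h2
        have hsup : Q₂.support = R₁.support ++ R₂.support := by
          rw [hQ₂eq, Walk.support_append, Walk.support_cons, List.tail_cons]
        have hnodup := hsup ▸ hQ₂path.support_nodup
        exact absurd R₂.end_mem_support
          ((List.disjoint_of_nodup_append hnodup) R₁.end_mem_support)
      · -- β = t₁, α = t₂ : the end of Q₂ is the edge d₁ itself
        subst h1; subst h2
        have hR₂ : R₂ = Walk.nil := by
          have h1 : (Walk.cons hadj₃ R₂).IsPath := Walk.IsPath.of_append_right (hQ₂eq ▸ hQ₂path)
          exact (Walk.isPath_iff_eq_nil (p := R₂)).mp ((Walk.cons_isPath_iff hadj₃ R₂).mp h1).1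
        subst hR₂
        have hQ₂sup : Q₂.support = R₁.support ++ [t₁] := by
          rw [hQ₂eq, Walk.support_append, Walk.support_cons, List.tail_cons, Walk.support_nil]
        have ht₁R₁ : t₁ ∉ R₁.support := by
          have hnodup := hQ₂sup ▸ hQ₂path.support_nodup
          exact fun h => (List.disjoint_of_nodup_append hnodup) h (by simp)
        have hQ₂edges : Q₂.edges = R₁.edges ++ [s(t₂, t₁)] := by
          rw [hQ₂eq, Walk.edges_append, Walk.edges_cons, Walk.edges_nil]
        have hE : ∀ e : Sym2 V, e ∈ (Walk.cons hadj Q).edges ↔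
            (e = s(t₂, t₁) ∨ e = s(wa, wb) ∨ e ∈ (Walk.cons hadj Q₁).edges ∨ e ∈ R₁.edges) := by
          intro e
          rw [Walk.edges_cons, hQedges, hQ₂edges, Walk.edges_cons]
          simp only [List.mem_cons, List.mem_append, List.mem_cons, List.mem_singleton,
            List.not_mem_nil, or_false]
          tauto
        have h1A2 : s(t₂, t₁) ∉ R₁.edges := fun h =>
          ht₁R₁ (mem_support_of_mem_edges'' h (by simp))
        have h2A2 : s(wa, wb) ∉ R₁.edges := fun h =>
          hd₂Q₂ (hQ₂edges ▸ List.mem_append.mpr (Or.inl h))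
        have hdisj : ∀ z, z ∈ (Walk.cons hadj Q₁).support → z ∉ R₁.support := by
          intro z hz hzR
          rw [Walk.support_cons, List.mem_cons] at hz
          rcases hz with rfl | hz
          · exact ht₁R₁ hzR
          · have hzQ₂ : z ∈ Q₂.support := hQ₂sup ▸ List.mem_append.mpr (Or.inl hzR)
            exact hQdisj z hz hzQ₂
        exact main_contra hcub hgirth hEC huv ht₂ ht₁ ht.symm ht₂v ht₁v hvwa hvwb hwawb
          hwau' hwbu' hγ hx hy hxy hcyc0 hcolD0 hE h1A2 h2A2 hdisj


end SnarkPaper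
end
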